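/- arXiv:1511.08929 — 2 statements merged into one kernel-verified Lean document; each statement's English description precedes it below -/
import Mathlib

section
/- Let r ≥ 0 be a real number and T ∈ B(X) such that for every λ ∈ ℂ with |λ| > 1 the operator T − λI is invertible and sup_{|λ|>1} ((|λ|−1)^{r+1}/|λ|^r) · ‖(T − λI)^{−1}‖ < ∞. If σ(T) ∩ 𝕋 has one-dimensional Hausdorff measure zero, then ‖T^n‖ / n^{r+1} → 0 as n → ∞. -/
open Filter Topology MeasureTheory Set
open scoped NNReal ENNReal Real

lemma arcsin_lipschitz : LipschitzOnWith 2 Real.arcsin (Icc (-(3/4) : ℝ) (3/4)) := by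
  apply (convex_Icc _ _).lipschitzOnWith_of_nnnorm_hasDerivWithin_le
    (f' := fun x => 1 / Real.sqrt (1 - x ^ 2))
  · intro x hx
    refine (Real.hasDerivAt_arcsin ?_ ?_).hasDerivWithinAt
    · rcases hx with ⟨h1, h2⟩; intro h; rw [h] at h1; norm_num at h1
    · rcases hx with ⟨h1, h2⟩; intro h; rw [h] at h2; norm_num at h2
  · intro x hx
    rcases hx with ⟨h1, h2⟩
    have hx2 : x ^ 2 ≤ 9/16 := by nlinarith
    have h7 : (7/16 : ℝ) ≤ 1 - x ^ 2 := by linarith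
    have hs : Real.sqrt (7/16) ≤ Real.sqrt (1 - x ^ 2) := Real.sqrt_le_sqrt h7
    have hs2 : (1/2 : ℝ) ≤ Real.sqrt (7/16) := by
      rw [show (1/2:ℝ) = Real.sqrt (1/4) by rw [show (1/4:ℝ) = (1/2)^2 by norm_num, Real.sqrt_sq]; norm_num]
      exact Real.sqrt_le_sqrt (by norm_num)
    have hpos : (0:ℝ) < Real.sqrt (1 - x ^ 2) := by linarith
    have : 1 / Real.sqrt (1 - x ^ 2) ≤ 2 := by
      rw [div_le_iff₀ hpos]; nlinarith
    have h0 : 0 ≤ 1 / Real.sqrt (1 - x ^ 2) := by positivity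
    rw [← NNReal.coe_le_coe]
    push_cast
    rwa [Real.norm_of_nonneg h0]

lemma sinbound {y : ℝ} (hy : |y| ≤ Real.pi/4) : |Real.sin y| ≤ 3/4 := by
  have hpi : (0:ℝ) < Real.pi := Real.pi_pos
  have hy2 := abs_le.1 hy
  have h1 : |Real.sin y| = Real.sin |y| := by
    rcases le_or_gt 0 y with h0 | h0
    · rw [abs_of_nonneg h0]
      exact abs_of_nonneg (Real.sin_nonneg_of_nonneg_of_le_pi h0 (by linarith [hy2.2]))
    · rw [abs_of_neg h0, Real.sin_neg]
      have hn : 0 ≤ Real.sin (-y) :=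
        Real.sin_nonneg_of_nonneg_of_le_pi (by linarith) (by linarith [hy2.1])
      rw [Real.sin_neg] at hn
      rw [abs_of_nonpos (by linarith)]
  rw [h1]
  have h2 : Real.sin |y| ≤ Real.sin (Real.pi/4) := by
    apply Real.strictMonoOn_sin.monotoneOn
    · constructor <;> [linarith [abs_nonneg y]; linarith]
    · constructor <;> linarith
    · exact hy
  have h3 : Real.sin (Real.pi/4) = Real.sqrt 2 / 2 := Real.sin_pi_div_four
  have h4 : Real.sqrt 2 ≤ 3/2 := by
    have := Real.sqrt_le_sqrt (show (2:ℝ) ≤ 9/4 by norm_num)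
    rwa [show (9/4:ℝ) = (3/2)^2 by norm_num, Real.sqrt_sq (by norm_num)] at this
  linarith

lemma image_null {F : Set ℂ} (hF : μH[1] F = 0) (a : ℝ) (h : ℂ → ℝ) (hh : LipschitzWith 1 h) :
    μH[1] ((fun w => a - Real.arcsin (h w)) '' (F ∩ {w | |h w| ≤ 3/4})) = 0 := by
  set s : Set ℂ := {w | |h w| ≤ 3/4} with hs
  have hmaps : Set.MapsTo h s (Icc (-(3/4) : ℝ) (3/4)) := fun w hw => abs_le.1 hw
  have hcomp : LipschitzOnWith 2 (Real.arcsin ∘ h) s := by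
    have := arcsin_lipschitz.comp (hh.lipschitzOnWith (s := s)) hmaps
    simpa using this
  have hsub : LipschitzWith 1 (fun t : ℝ => a - t) :=
    LipschitzWith.of_dist_le_mul fun x y => by
      rw [Real.dist_eq, Real.dist_eq, NNReal.coe_one, one_mul, show a - x - (a - y) = -(x - y) by ring, abs_neg]
  have hfull : LipschitzOnWith 2 (fun w => a - Real.arcsin (h w)) s := by
    have := hsub.comp_lipschitzOnWith hcomp
    simpa [Function.comp_def] using this
  have hle := (hfull.mono (Set.inter_subset_right (s := F))).hausdorffMeasure_image_le zero_le_one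
  refine le_antisymm (hle.trans ?_) zero_le
  have h0 : μH[1] (F ∩ s) = 0 := measure_mono_null Set.inter_subset_left hF
  rw [h0, mul_zero]

lemma lip_im : LipschitzWith 1 (fun w : ℂ => w.im) :=
  LipschitzWith.of_dist_le_mul fun x y => by
    rw [NNReal.coe_one, one_mul, Real.dist_eq, Complex.dist_eq]
    simpa [Complex.sub_im] using Complex.abs_im_le_norm (x - y)

lemma lip_re : LipschitzWith 1 (fun w : ℂ => w.re) :=
  LipschitzWith.of_dist_le_mul fun x y => by
    rw [NNReal.coe_one, one_mul, Real.dist_eq, Complex.dist_eq]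
    simpa [Complex.sub_re] using Complex.abs_re_le_norm (x - y)

lemma lip_nim : LipschitzWith 1 (fun w : ℂ => -w.im) :=
  LipschitzWith.of_dist_le_mul fun x y => by
    rw [NNReal.coe_one, one_mul, Real.dist_eq, Complex.dist_eq,
      show -x.im - -y.im = -(x.im - y.im) by ring, abs_neg]
    simpa [Complex.sub_im] using Complex.abs_im_le_norm (x - y)

lemma lip_nre : LipschitzWith 1 (fun w : ℂ => -w.re) :=
  LipschitzWith.of_dist_le_mul fun x y => by
    rw [NNReal.coe_one, one_mul, Real.dist_eq, Complex.dist_eq,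
      show -x.re - -y.re = -(x.re - y.re) by ring, abs_neg]
    simpa [Complex.sub_re] using Complex.abs_re_le_norm (x - y)

lemma volume_angle_null {σs : Set ℂ} (h0 : μH[1] (σs ∩ Metric.sphere (0:ℂ) 1) = 0) :
    volume {θ : ℝ | θ ∈ Icc 0 (2*Real.pi) ∧ Complex.exp (-(θ:ℂ) * Complex.I) ∈ σs} = 0 := by
  have hpi : (0:ℝ) < Real.pi := Real.pi_pos
  set F : Set ℂ := σs ∩ Metric.sphere (0:ℂ) 1 with hF
  have img : ∀ (a : ℝ) (h : ℂ → ℝ), LipschitzWith 1 h →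
      μH[1] ((fun w => a - Real.arcsin (h w)) '' (F ∩ {w | |h w| ≤ 3/4})) = 0 :=
    fun a h hh => image_null h0 a h hh
  let S1 := (fun w : ℂ => 0 - Real.arcsin w.im) '' (F ∩ {w | |w.im| ≤ 3/4})
  let S2 := (fun w : ℂ => Real.pi/2 - Real.arcsin w.re) '' (F ∩ {w | |w.re| ≤ 3/4})
  let S3 := (fun w : ℂ => Real.pi - Real.arcsin (-w.im)) '' (F ∩ {w | |(-w.im)| ≤ 3/4})
  let S4 := (fun w : ℂ => 3*Real.pi/2 - Real.arcsin (-w.re)) '' (F ∩ {w | |(-w.re)| ≤ 3/4})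
  let S5 := (fun w : ℂ => 2*Real.pi - Real.arcsin w.im) '' (F ∩ {w | |w.im| ≤ 3/4})
  rw [← hausdorffMeasure_real]
  apply measure_mono_null (t := S1 ∪ S2 ∪ S3 ∪ S4 ∪ S5)
  · rintro θ ⟨⟨hθ0, hθ2⟩, hσ⟩
    set w : ℂ := Complex.exp (-(θ:ℂ) * Complex.I) with hw
    have hcast : (-(θ:ℂ)) * Complex.I = ((-θ : ℝ) : ℂ) * Complex.I := by push_cast; ring
    have hre : w.re = Real.cos θ := by
      rw [hw, hcast, Complex.exp_ofReal_mul_I_re, Real.cos_neg]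
    have him : w.im = -Real.sin θ := by
      rw [hw, hcast, Complex.exp_ofReal_mul_I_im, Real.sin_neg]
    have hsph : w ∈ Metric.sphere (0:ℂ) 1 := by
      simp only [Metric.mem_sphere, Complex.dist_eq, sub_zero]
      rw [hw, hcast]
      exact Complex.norm_exp_ofReal_mul_I _
    have hwF : w ∈ F := ⟨hσ, hsph⟩
    rcases le_or_gt θ (Real.pi/4) with c1 | c1
    · refine Or.inl (Or.inl (Or.inl (Or.inl ⟨w, ⟨hwF, ?_⟩, ?_⟩)))
      · show |w.im| ≤ 3/4
        rw [him, abs_neg]; exact sinbound (by rw [abs_of_nonneg hθ0]; exact c1)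
      · show 0 - Real.arcsin w.im = θ
        rw [him, ← Real.sin_neg, Real.arcsin_sin (by linarith) (by linarith)]; ring
    rcases le_or_gt θ (3*Real.pi/4) with c2 | c2
    · refine Or.inl (Or.inl (Or.inl (Or.inr ⟨w, ⟨hwF, ?_⟩, ?_⟩)))
      · show |w.re| ≤ 3/4
        rw [hre, ← Real.sin_pi_div_two_sub]
        exact sinbound (abs_le.2 ⟨by linarith, by linarith⟩)
      · show Real.pi/2 - Real.arcsin w.re = θ
        rw [hre, ← Real.sin_pi_div_two_sub, Real.arcsin_sin (by linarith) (by linarith)]; ring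
    rcases le_or_gt θ (5*Real.pi/4) with c3 | c3
    · refine Or.inl (Or.inl (Or.inr ⟨w, ⟨hwF, ?_⟩, ?_⟩))
      · show |(-w.im)| ≤ 3/4
        rw [him, neg_neg, ← Real.sin_pi_sub]
        exact sinbound (abs_le.2 ⟨by linarith, by linarith⟩)
      · show Real.pi - Real.arcsin (-w.im) = θ
        rw [him, neg_neg, ← Real.sin_pi_sub, Real.arcsin_sin (by linarith) (by linarith)]; ring
    rcases le_or_gt θ (7*Real.pi/4) with c4 | c4
    · refine Or.inl (Or.inr ⟨w, ⟨hwF, ?_⟩, ?_⟩)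
      · show |(-w.re)| ≤ 3/4
        have : -w.re = Real.sin (Real.pi/2 - (θ - Real.pi)) := by
          rw [Real.sin_pi_div_two_sub, Real.cos_sub_pi, hre]
        rw [this]
        exact sinbound (abs_le.2 ⟨by linarith, by linarith⟩)
      · show 3*Real.pi/2 - Real.arcsin (-w.re) = θ
        have : -w.re = Real.sin (Real.pi/2 - (θ - Real.pi)) := by
          rw [Real.sin_pi_div_two_sub, Real.cos_sub_pi, hre]
        rw [this, Real.arcsin_sin (by linarith) (by linarith)]; ring
    · refine Or.inr ⟨w, ⟨hwF, ?_⟩, ?_⟩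
      · show |w.im| ≤ 3/4
        have : w.im = Real.sin (2*Real.pi - θ) := by
          rw [show 2*Real.pi - θ = -θ + 2*Real.pi by ring, Real.sin_add_two_pi, Real.sin_neg, him]
        rw [this]
        exact sinbound (abs_le.2 ⟨by linarith, by linarith⟩)
      · show 2*Real.pi - Real.arcsin w.im = θ
        have : w.im = Real.sin (2*Real.pi - θ) := by
          rw [show 2*Real.pi - θ = -θ + 2*Real.pi by ring, Real.sin_add_two_pi, Real.sin_neg, him]
        rw [this, Real.arcsin_sin (by linarith) (by linarith)]; ring
  · refine measure_union_null (measure_union_null (measure_union_null (measure_union_null ?_ ?_) ?_) ?_) ?_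
    · exact img 0 _ lip_im
    · exact img (Real.pi/2) _ lip_re
    · exact img Real.pi _ lip_nim
    · exact img (3*Real.pi/2) _ lip_nre
    · exact img (2*Real.pi) _ lip_im

section BanachAlg
variable {X : Type*} [NormedAddCommGroup X] [NormedSpace ℂ X] [CompleteSpace X]

lemma spec_subset (T : X →L[ℂ] X)
    (hres : ∀ lam : ℂ, 1 < ‖lam‖ → ∃ S : X →L[ℂ] X,
      (T - lam • (1 : X →L[ℂ] X)) ∘L S = 1 ∧ S ∘L (T - lam • (1 : X →L[ℂ] X)) = 1) :
    spectrum ℂ T ⊆ Metric.closedBall (0:ℂ) 1 := by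
  intro lam hlam
  by_contra hmem
  rw [Metric.mem_closedBall, Complex.dist_eq, sub_zero] at hmem
  push_neg at hmem
  obtain ⟨S, hS1, hS2⟩ := hres lam (by exact hmem)
  have h1 : (T - lam • (1 : X →L[ℂ] X)) * S = 1 := hS1
  have h2 : S * (T - lam • (1 : X →L[ℂ] X)) = 1 := hS2
  have : IsUnit (algebraMap ℂ (X →L[ℂ] X) lam - T) := by
    rw [Algebra.algebraMap_eq_smul_one]
    exact ⟨⟨lam • 1 - T, -S, by rw [show lam • (1 : X →L[ℂ] X) - T = -(T - lam • 1) from (neg_sub _ _).symm,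
      neg_mul_neg, h1], by rw [show lam • (1 : X →L[ℂ] X) - T = -(T - lam • 1) from (neg_sub _ _).symm,
      mul_neg, neg_mul, neg_neg, h2]⟩, rfl⟩
  exact spectrum.notMem_iff.2 this hlam

lemma spec_radius_le (T : X →L[ℂ] X) (hsub : spectrum ℂ T ⊆ Metric.closedBall (0:ℂ) 1) :
    spectralRadius ℂ T ≤ 1 := by
  rw [spectralRadius]
  refine iSup₂_le fun k hk => ?_
  have := hsub hk
  rw [Metric.mem_closedBall, Complex.dist_eq, sub_zero] at this
  have hk1 : ‖k‖₊ ≤ 1 := this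
  exact_mod_cast hk1

lemma rep_pow (T : X →L[ℂ] X) (hsp : spectralRadius ℂ T ≤ 1) {s : ℝ} (h0 : 0 < s) (h1 : s < 1)
    (n : ℕ) :
    (T^n : X →L[ℂ] X) = (2 * Real.pi * Complex.I : ℂ)⁻¹ •
      ∮ z in C(0, s), ((1:ℂ) / (z - 0)) ^ n • (z - 0)⁻¹ • Ring.inverse (1 - z • T) := by
  set r : ℝ≥0 := ⟨s, h0.le⟩ with hr
  have hrs : (r : ℝ) = s := rfl
  have hlt : (r : ℝ≥0∞) < (spectralRadius ℂ T)⁻¹ := by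
    refine lt_of_lt_of_le ?_ (ENNReal.one_le_inv.2 hsp)
    rw [← ENNReal.coe_one, ENNReal.coe_lt_coe]
    exact_mod_cast h1
  have hrpos : 0 < r := by exact_mod_cast h0
  have H1 := (spectrum.differentiableOn_inverse_one_sub_smul hlt).hasFPowerSeriesOnBall hrpos
  have H2 := (spectrum.hasFPowerSeriesOnBall_inverse_one_sub_smul ℂ T).hasFPowerSeriesAt
  have heq := H2.eq_formalMultilinearSeries H1.hasFPowerSeriesAt
  have hcoef := congrFun heq n
  have happ := congrArg (fun (p : ContinuousMultilinearMap ℂ (fun _ : Fin n => ℂ) (X →L[ℂ] X)) =>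
    p (fun _ => (1:ℂ))) hcoef
  simp only [ContinuousMultilinearMap.mkPiRing_apply, Finset.prod_const, one_pow, one_smul] at happ
  rw [cauchyPowerSeries_apply] at happ
  rw [← hrs]; exact happ

lemma inverse_eval (T S : X →L[ℂ] X) (z : ℂ) (hz : z ≠ 0)
    (h1 : (T - z⁻¹ • (1 : X →L[ℂ] X)) * S = 1) (h2 : S * (T - z⁻¹ • (1 : X →L[ℂ] X)) = 1) :
    Ring.inverse (1 - z • T) = (-z)⁻¹ • S := by
  have key : (1 : X →L[ℂ] X) - z • T = (-z) • (T - z⁻¹ • (1 : X →L[ℂ] X)) := by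
    rw [smul_sub, smul_smul, neg_mul, mul_inv_cancel₀ hz, neg_smul, neg_smul, one_smul,
      sub_neg_eq_add]
    abel
  have hnz : (-z) ≠ 0 := neg_ne_zero.2 hz
  have hu1 : ((1 : X →L[ℂ] X) - z • T) * ((-z)⁻¹ • S) = 1 := by
    rw [key, smul_mul_smul_comm, mul_inv_cancel₀ hnz, h1, one_smul]
  have hu2 : ((-z)⁻¹ • S) * ((1 : X →L[ℂ] X) - z • T) = 1 := by
    rw [key, smul_mul_smul_comm, inv_mul_cancel₀ hnz, h2, one_smul]
  exact Ring.inverse_unit ⟨(1 : X →L[ℂ] X) - z • T, (-z)⁻¹ • S, hu1, hu2⟩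

lemma resolvent_eval (T S : X →L[ℂ] X) (lam : ℂ)
    (h1 : (T - lam • (1 : X →L[ℂ] X)) * S = 1) (h2 : S * (T - lam • (1 : X →L[ℂ] X)) = 1) :
    resolvent T lam = -S := by
  have key : algebraMap ℂ (X →L[ℂ] X) lam - T = -(T - lam • (1 : X →L[ℂ] X)) := by
    rw [Algebra.algebraMap_eq_smul_one, neg_sub]
  rw [resolvent, key]
  exact Ring.inverse_unit ⟨-(T - lam • (1 : X →L[ℂ] X)), -S, by rw [neg_mul_neg, h1],
    by rw [neg_mul_neg, h2]⟩

lemma exists_M (T : X →L[ℂ] X) (δ : ℝ) (hδ : 0 < δ) :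
    ∃ M : ℝ, 0 ≤ M ∧ ∀ w : ℂ, ‖w‖ ≤ 2 → δ ≤ Metric.infDist w (spectrum ℂ T) →
      ‖resolvent T w‖ ≤ M := by
  set K : Set ℂ := Metric.closedBall (0:ℂ) 2 ∩ {w | δ ≤ Metric.infDist w (spectrum ℂ T)} with hK
  have hKc : IsCompact K := by
    apply (isCompact_closedBall (0:ℂ) 2).inter_right
    exact isClosed_Ici.preimage (Metric.continuous_infDist_pt (spectrum ℂ T))
  have hres : ∀ w ∈ K, w ∈ resolventSet ℂ T := by
    rintro w ⟨-, hw⟩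
    have hw' : δ ≤ Metric.infDist w (spectrum ℂ T) := hw
    have hns : w ∉ spectrum ℂ T := fun hmem => by
      rw [Metric.infDist_zero_of_mem hmem] at hw'; exact absurd hw' (not_le.2 hδ)
    rw [spectrum] at hns
    exact Set.not_notMem.1 hns
  have hcont : ContinuousOn (fun w => resolvent T w) K := fun w hw =>
    (spectrum.hasDerivAt_resolvent (hres w hw)).continuousAt.continuousWithinAt
  obtain ⟨M, hM⟩ := hKc.exists_bound_of_continuousOn hcont
  refine ⟨max M 0, le_max_right _ _, fun w hw1 hw2 => ?_⟩
  exact le_trans (hM w ⟨by rwa [Metric.mem_closedBall, Complex.dist_eq, sub_zero], hw2⟩) (le_max_left _ _)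

end BanachAlg


set_option maxHeartbeats 2000000

/-- If for some r ≥ 0 the resolvent satisfies
sup_{|λ|>1} ((|λ|−1)^{r+1}/|λ|^r)·‖(T − λI)⁻¹‖ < ∞ and σ(T) ∩ 𝕋 has one-dimensional
Hausdorff measure zero, then ‖T^n‖ = o(n^{r+1}). -/
theorem stmt14 {X : Type*} [NormedAddCommGroup X] [NormedSpace ℂ X] [CompleteSpace X]
    (T : X →L[ℂ] X)
    (r : ℝ) (hr : 0 ≤ r)
    (hres : ∃ C : ℝ, ∀ lam : ℂ, 1 < ‖lam‖ →
      ∃ S : X →L[ℂ] X,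
        (T - lam • (1 : X →L[ℂ] X)) ∘L S = 1 ∧
        S ∘L (T - lam • (1 : X →L[ℂ] X)) = 1 ∧
        ((‖lam‖ - 1) ^ (r + 1) / ‖lam‖ ^ r) * ‖S‖ ≤ C)
    (hspec : (MeasureTheory.Measure.hausdorffMeasure 1 : Measure ℂ)
      (spectrum ℂ T ∩ Metric.sphere (0 : ℂ) 1) = 0) :
    Tendsto (fun n : ℕ => ‖T ^ n‖ / (n : ℝ) ^ (r + 1)) atTop (𝓝 0) := by
  classical
  rcases subsingleton_or_nontrivial X with hX | hX
  · haveI : Subsingleton (X →L[ℂ] X) := ⟨fun f g => by ext x; exact Subsingleton.elim _ _⟩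
    have h0 : ∀ n : ℕ, (T ^ n : X →L[ℂ] X) = 0 := fun n => Subsingleton.elim _ _
    simp only [h0, norm_zero, zero_div]
    exact tendsto_const_nhds
  haveI : Nontrivial (X →L[ℂ] X) := by
    refine ⟨1, 0, fun h => ?_⟩
    obtain ⟨x, hx⟩ := exists_ne (0 : X)
    have := ContinuousLinearMap.ext_iff.1 h x
    simp only [ContinuousLinearMap.one_apply, ContinuousLinearMap.zero_apply] at this
    exact hx this
  obtain ⟨C, hC⟩ := hres
  have nsmul : ∀ (c : ℂ) (f : X →L[ℂ] X), ‖c • f‖ = ‖c‖ * ‖f‖ := fun c f => norm_smul c f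
  -- C is nonnegative
  have hCnn : 0 ≤ C := by
    obtain ⟨S, -, -, hb⟩ := hC 2 (by norm_num)
    refine le_trans ?_ hb
    have h2 : ‖(2:ℂ)‖ = 2 := by norm_num
    rw [h2]
    positivity
  have hsub : spectrum ℂ T ⊆ Metric.closedBall (0:ℂ) 1 :=
    spec_subset T (fun lam hl => (hC lam hl).imp (fun S hS => ⟨hS.1, hS.2.1⟩))
  have hsp : spectralRadius ℂ T ≤ 1 := spec_radius_le T hsub
  -- angle sets
  set u : ℝ → ℂ := fun θ => Complex.exp (-(θ:ℂ) * Complex.I) with hu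
  have hucont : Continuous u := by
    apply Complex.continuous_exp.comp
    exact (continuous_neg.comp Complex.continuous_ofReal).mul continuous_const
  have hunorm : ∀ θ : ℝ, ‖u θ‖ = 1 := by
    intro θ
    have hcast : (-(θ:ℂ)) * Complex.I = ((-θ : ℝ) : ℂ) * Complex.I := by push_cast; ring
    rw [hu]
    dsimp only
    rw [hcast]
    exact Complex.norm_exp_ofReal_mul_I _
  have hdcont : Continuous fun θ : ℝ => Metric.infDist (u θ) (spectrum ℂ T) :=
    (Metric.continuous_infDist_pt _).comp hucont
  -- decreasing family of bad angle sets
  set Sk : ℕ → Set ℝ := fun k =>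
    Icc 0 (2*Real.pi) ∩ {θ | Metric.infDist (u θ) (spectrum ℂ T) < 1/(k+1)} with hSk
  have hSkMeas : ∀ k, MeasurableSet (Sk k) := fun k =>
    measurableSet_Icc.inter (measurableSet_lt (hdcont.measurable) measurable_const)
  have hSkAnti : Antitone Sk := by
    intro k m hkm θ hθ
    have hθ2 : Metric.infDist (u θ) (spectrum ℂ T) < 1/((m:ℝ)+1) := hθ.2
    refine ⟨hθ.1, show Metric.infDist (u θ) (spectrum ℂ T) < 1/((k:ℝ)+1) from lt_of_lt_of_le hθ2 ?_⟩
    apply one_div_le_one_div_of_le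
    · positivity
    · have : (k:ℝ) ≤ (m:ℝ) := Nat.cast_le.2 hkm
      linarith
  have hInter : (⋂ k, Sk k) = {θ : ℝ | θ ∈ Icc 0 (2*Real.pi) ∧ u θ ∈ spectrum ℂ T} := by
    ext θ
    simp only [Set.mem_iInter, hSk, Set.mem_inter_iff, Set.mem_setOf_eq, Set.mem_Icc]
    constructor
    · intro h
      have h0 := (h 0).1
      refine ⟨h0, ?_⟩
      have hzero : Metric.infDist (u θ) (spectrum ℂ T) = 0 := by
        by_contra hne
        have hpos : 0 < Metric.infDist (u θ) (spectrum ℂ T) :=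
          lt_of_le_of_ne Metric.infDist_nonneg (Ne.symm hne)
        obtain ⟨k, hk⟩ := exists_nat_one_div_lt hpos
        exact absurd (h k).2 (not_lt.2 (le_of_lt hk))
      rw [← (spectrum.isClosed (𝕜 := ℂ) T).mem_iff_infDist_zero (spectrum.nonempty T)] at hzero
      exact hzero
    · intro ⟨h1, h2⟩ k
      exact ⟨h1, by rw [Metric.infDist_zero_of_mem h2]; positivity⟩
  have hE0 : volume (⋂ k, Sk k) = 0 := by
    rw [hInter]
    exact volume_angle_null hspec
  have htend : Tendsto (fun k => volume (Sk k)) atTop (𝓝 0) := by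
    have := tendsto_measure_iInter_atTop (μ := volume)
      (fun k => (hSkMeas k).nullMeasurableSet) hSkAnti
      ⟨0, ((measure_mono (Set.inter_subset_left)).trans_lt measure_Icc_lt_top).ne⟩
    rwa [hE0] at this
  rw [Metric.tendsto_atTop]
  intro ε hε
  -- key constants
  set K1 : ℝ := 6 * C * (2:ℝ) ^ r with hK1
  have hK1nn : 0 ≤ K1 := by positivity
  set ε' : ℝ := ε / (2 * (K1 + 1)) with hε'
  have hε'pos : 0 < ε' := by positivity
  -- choose k
  obtain ⟨k, hk⟩ : ∃ k, volume (Sk k) < ENNReal.ofReal ε' := by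
    have := htend.eventually_lt_const (by
      simp only [ENNReal.ofReal_pos]; exact hε'pos : (0:ℝ≥0∞) < ENNReal.ofReal ε')
    exact this.exists
  set δ : ℝ := 1/(k+1) with hδdef
  have hδpos : 0 < δ := by positivity
  obtain ⟨M, hMnn, hM⟩ := exists_M T (δ/2) (by positivity)
  obtain ⟨N1, hN1⟩ := exists_nat_gt (max (2/δ) (12*M/ε))
  set N : ℕ := max N1 1 with hN
  refine ⟨N, fun n hn => ?_⟩
  -- setup for fixed n
  have hn1 : 1 ≤ n := le_trans (le_max_right N1 1) hn
  have hnn1 : (1:ℝ) ≤ (n:ℝ) := by exact_mod_cast hn1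
  have hnpos : (0:ℝ) < n := by linarith
  have hnN1 : (N1 : ℝ) ≤ (n:ℝ) := by exact_mod_cast le_trans (le_max_left N1 1) hn
  have hn2δ : 2/δ < (n:ℝ) := lt_of_le_of_lt (le_max_left _ _) (lt_of_lt_of_le hN1 hnN1)
  have hn12M : 12*M/ε < (n:ℝ) := lt_of_le_of_lt (le_max_right _ _) (lt_of_lt_of_le hN1 hnN1)
  set s : ℝ := (n:ℝ)/((n:ℝ)+1) with hs
  have hs0 : 0 < s := by positivity
  have hs1 : s < 1 := by rw [hs, div_lt_one (by linarith)]; linarith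
  have hsinv : s⁻¹ = ((n:ℝ)+1)/(n:ℝ) := by rw [hs, inv_div]
  have hsinv1 : s⁻¹ = 1 + 1/(n:ℝ) := by rw [hsinv]; field_simp
  have hβ1 : s⁻¹ - 1 = 1/(n:ℝ) := by rw [hsinv1]; ring
  have hβ2 : s⁻¹ ≤ 2 := by
    rw [hsinv1]
    have : 1/(n:ℝ) ≤ 1 := by rw [div_le_one hnpos]; exact hnn1
    linarith
  have hβgt : 1 < s⁻¹ := by
    rw [hsinv1]
    have : 0 < 1/(n:ℝ) := by positivity
    linarith
  have hspow : (s⁻¹)^n ≤ 3 := by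
    have h1 : s⁻¹ ≤ Real.exp (1/(n:ℝ)) := by
      rw [hsinv1]
      have := Real.add_one_le_exp (1/(n:ℝ))
      linarith
    calc (s⁻¹)^n ≤ (Real.exp (1/(n:ℝ)))^n := pow_le_pow_left₀ (by positivity) h1 n
      _ = Real.exp ((n:ℝ) * (1/(n:ℝ))) := by rw [Real.exp_nat_mul]
      _ = Real.exp 1 := by rw [mul_one_div, div_self (ne_of_gt hnpos)]
      _ ≤ 3 := by have := Real.exp_one_lt_d9; linarith
  -- representation
  have hrep := rep_pow T hsp hs0 hs1 n
  set F : ℝ → (X →L[ℂ] X) := fun θ => deriv (circleMap 0 s) θ •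
    (((1:ℂ) / (circleMap 0 s θ - 0)) ^ n • (circleMap 0 s θ - 0)⁻¹ •
      Ring.inverse (1 - circleMap 0 s θ • T)) with hF
  have hFrep : (T^n : X →L[ℂ] X) = (2 * Real.pi * Complex.I : ℂ)⁻¹ •
      ∫ θ in (0:ℝ)..(2*Real.pi), F θ := hrep
  -- bad set
  set Bad : Set ℝ := {θ | Metric.infDist (u θ) (spectrum ℂ T) < δ} with hBad
  have hBadMeas : MeasurableSet Bad := measurableSet_lt hdcont.measurable measurable_const
  set φ : ℝ → ℝ := fun θ => 6*M + Set.indicator Bad (fun _ => K1 * (n:ℝ)^(r+1)) θ with hφ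
  -- pointwise bound
  have hbound : ∀ θ : ℝ, ‖F θ‖ ≤ φ θ := by
    intro θ
    set z : ℂ := circleMap 0 s θ with hz
    have hznorm : ‖z‖ = s := by
      rw [hz]
      simp only [norm_circleMap_zero]
      exact abs_of_pos hs0
    have hzne : z ≠ 0 := by
      intro h; rw [h, norm_zero] at hznorm; exact absurd hznorm.symm (ne_of_gt hs0)
    have hlamnorm : ‖z⁻¹‖ = s⁻¹ := by rw [norm_inv, hznorm]
    have hlamgt : 1 < ‖z⁻¹‖ := by rw [hlamnorm]; exact hβgt
    obtain ⟨S, hS1, hS2, hSb⟩ := hC z⁻¹ hlamgt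
    have hginv : Ring.inverse (1 - z • T) = (-z)⁻¹ • S := inverse_eval T S z hzne hS1 hS2
    -- norm of F θ
    have hder : deriv (circleMap 0 s) θ = circleMap 0 s θ * Complex.I := deriv_circleMap _ _ _
    have hFnorm : ‖F θ‖ = (s⁻¹)^n * (s⁻¹ * ‖S‖) := by
      simp only [hF, ← hz, sub_zero, hder, hginv]
      rw [nsmul, nsmul, nsmul, nsmul]
      rw [norm_mul, Complex.norm_I, mul_one, hznorm]
      rw [norm_pow, norm_div, norm_one, hznorm, norm_inv, hznorm, norm_inv, norm_neg, hznorm]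
      rw [one_div]
      rw [show s * (s⁻¹ ^ n * (s⁻¹ * (s⁻¹ * ‖S‖))) = (s * s⁻¹) * (s⁻¹ ^ n * (s⁻¹ * ‖S‖)) by ring,
        mul_inv_cancel₀ (ne_of_gt hs0), one_mul]
    have h6 : ‖F θ‖ ≤ 6 * ‖S‖ := by
      rw [hFnorm]
      have hSnn : (0:ℝ) ≤ ‖S‖ := norm_nonneg _
      have hsinvpos : (0:ℝ) < s⁻¹ := by positivity
      calc (s⁻¹)^n * (s⁻¹ * ‖S‖) ≤ 3 * (s⁻¹ * ‖S‖) :=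
            mul_le_mul_of_nonneg_right hspow (by positivity)
        _ ≤ 3 * (2 * ‖S‖) := by
            apply mul_le_mul_of_nonneg_left ?_ (by norm_num)
            exact mul_le_mul_of_nonneg_right hβ2 hSnn
        _ = 6 * ‖S‖ := by ring
    by_cases hθbad : θ ∈ Bad
    · -- bad: use resolvent growth bound
      have hSle : ‖S‖ ≤ C * (s⁻¹)^r * (n:ℝ)^(r+1) := by
        rw [hlamnorm, hβ1] at hSb
        have hw : (0:ℝ) < ((1:ℝ)/(n:ℝ))^(r+1) / (s⁻¹)^r := by
          apply div_pos
          · apply Real.rpow_pos_of_pos; positivity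
          · apply Real.rpow_pos_of_pos; positivity
        have hSle' : ‖S‖ ≤ C / (((1:ℝ)/(n:ℝ))^(r+1) / (s⁻¹)^r) := (le_div_iff₀' hw).2 hSb
        have heq : C / (((1:ℝ)/(n:ℝ))^(r+1) / (s⁻¹)^r) = C * (s⁻¹)^r * (n:ℝ)^(r+1) := by
          have h1 : ((n:ℝ)^(r+1)) ≠ 0 := ne_of_gt (Real.rpow_pos_of_pos hnpos _)
          have h2 : ((s⁻¹:ℝ))^r ≠ 0 := ne_of_gt (Real.rpow_pos_of_pos (by positivity) _)
          rw [one_div, Real.inv_rpow (le_of_lt hnpos)]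
          field_simp
        rwa [heq] at hSle'
      have hSle2 : ‖S‖ ≤ C * (2:ℝ)^r * (n:ℝ)^(r+1) := by
        refine le_trans hSle ?_
        have h2r : (s⁻¹)^r ≤ (2:ℝ)^r := Real.rpow_le_rpow (by positivity) hβ2 hr
        have hnp : (0:ℝ) < (n:ℝ)^(r+1) := Real.rpow_pos_of_pos hnpos _
        exact mul_le_mul_of_nonneg_right (mul_le_mul_of_nonneg_left h2r hCnn) hnp.le
      rw [hφ]
      simp only [Set.indicator_of_mem hθbad]
      calc ‖F θ‖ ≤ 6 * ‖S‖ := h6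
        _ ≤ 6 * (C * (2:ℝ)^r * (n:ℝ)^(r+1)) := by linarith
        _ = K1 * (n:ℝ)^(r+1) := by rw [hK1]; ring
        _ ≤ 6*M + K1 * (n:ℝ)^(r+1) := by linarith
    · -- good: resolvent bounded on compact set
      have hgood : δ ≤ Metric.infDist (u θ) (spectrum ℂ T) := not_lt.1 hθbad
      have hzinv : z⁻¹ = (s⁻¹ : ℝ) * u θ := by
        rw [hz, circleMap, zero_add, mul_inv, hu]
        rw [← Complex.exp_neg]
        push_cast
        ring_nf
      have hdist : dist z⁻¹ (u θ) = s⁻¹ - 1 := by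
        rw [dist_eq_norm, hzinv]
        have : ((s⁻¹:ℝ):ℂ) * u θ - u θ = ((s⁻¹ - 1 : ℝ):ℂ) * u θ := by push_cast; ring
        rw [this, norm_mul, hunorm, mul_one, Complex.norm_real, Real.norm_eq_abs,
          abs_of_pos (by linarith : (0:ℝ) < s⁻¹ - 1)]
      have hinf2 : δ/2 ≤ Metric.infDist z⁻¹ (spectrum ℂ T) := by
        have htri := Metric.infDist_le_infDist_add_dist (x := u θ) (y := z⁻¹)
          (s := spectrum ℂ T)
        have hsmall : s⁻¹ - 1 ≤ δ/2 := by
          rw [hβ1]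
          rw [div_lt_iff₀ hδpos] at hn2δ
          rw [div_le_div_iff₀ hnpos (by norm_num : (0:ℝ) < 2)]
          linarith
        rw [dist_comm (u θ) z⁻¹, hdist] at htri
        linarith
      have hresv : resolvent T z⁻¹ = -S := resolvent_eval T S z⁻¹ hS1 hS2
      have hSM : ‖S‖ ≤ M := by
        have := hM z⁻¹ (by rw [hlamnorm]; exact hβ2) hinf2
        rw [hresv, norm_neg] at this
        exact this
      rw [hφ]
      simp only [Set.indicator_of_notMem hθbad, add_zero]
      calc ‖F θ‖ ≤ 6 * ‖S‖ := h6
        _ ≤ 6 * M := by linarith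
  -- integrability of φ
  have hint1 : IntervalIntegrable (fun _ : ℝ => 6*M) volume 0 (2*Real.pi) :=
    intervalIntegrable_const
  have hint2 : IntervalIntegrable (Set.indicator Bad (fun _ => K1 * (n:ℝ)^(r+1)))
      volume 0 (2*Real.pi) := by
    constructor
    · exact (integrableOn_const measure_Ioc_lt_top.ne).indicator hBadMeas
    · exact (integrableOn_const measure_Ioc_lt_top.ne).indicator hBadMeas
  have hintφ : IntervalIntegrable φ volume 0 (2*Real.pi) := hint1.add hint2
  -- value of ∫ φ
  set V : ℝ := (volume (Bad ∩ Ioc 0 (2*Real.pi))).toReal with hV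
  have hVnn : 0 ≤ V := ENNReal.toReal_nonneg
  have hVle : V ≤ ε' := by
    have hsubk : Bad ∩ Ioc 0 (2*Real.pi) ⊆ Sk k := by
      rintro θ ⟨hb, hIoc⟩
      exact ⟨⟨le_of_lt hIoc.1, hIoc.2⟩, hb⟩
    have := (measure_mono hsubk).trans_lt hk
    rw [hV]
    exact ENNReal.toReal_le_of_le_ofReal (le_of_lt hε'pos) (le_of_lt this)
  have hφint_val : ∫ θ in (0:ℝ)..(2*Real.pi), φ θ =
      6*M*(2*Real.pi) + K1 * (n:ℝ)^(r+1) * V := by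
    rw [hφ, intervalIntegral.integral_add hint1 hint2]
    rw [intervalIntegral.integral_const]
    rw [intervalIntegral.integral_of_le (by positivity : (0:ℝ) ≤ 2*Real.pi)]
    rw [MeasureTheory.integral_indicator hBadMeas]
    rw [MeasureTheory.setIntegral_const, measureReal_restrict_apply hBadMeas, measureReal_def]
    simp only [smul_eq_mul, sub_zero]
    rw [← hV]
    ring
  -- norm bound on integral
  have hnormint : ‖∫ θ in (0:ℝ)..(2*Real.pi), F θ‖ ≤
      6*M*(2*Real.pi) + K1 * (n:ℝ)^(r+1) * V := by
    have h1 := intervalIntegral.norm_integral_le_of_norm_le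
      (f := F) (g := φ) (μ := volume) (a := 0) (b := 2*Real.pi)
      (by positivity) (ae_of_all _ (fun θ _ => hbound θ)) hintφ
    rw [hφint_val] at h1
    have hpos : 0 ≤ 6*M*(2*Real.pi) + K1 * (n:ℝ)^(r+1) * V := by
      have : (0:ℝ) ≤ (n:ℝ)^(r+1) := le_of_lt (Real.rpow_pos_of_pos hnpos _)
      have hπ : (0:ℝ) < Real.pi := Real.pi_pos
      positivity
    exact h1
  -- final estimate
  have hTn : ‖(T^n : X →L[ℂ] X)‖ ≤ 6*M + K1 * ε' * (n:ℝ)^(r+1) := by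
    have hπ : (0:ℝ) < Real.pi := Real.pi_pos
    have hcoef : ‖(2 * Real.pi * Complex.I : ℂ)⁻¹‖ = (2*Real.pi)⁻¹ := by
      rw [norm_inv, norm_mul, Complex.norm_I, mul_one, norm_mul]
      simp only [Complex.norm_two, Complex.norm_real, Real.norm_eq_abs,
        abs_of_pos hπ]
    calc ‖(T^n : X →L[ℂ] X)‖
        = ‖(2 * Real.pi * Complex.I : ℂ)⁻¹‖ * ‖∫ θ in (0:ℝ)..(2*Real.pi), F θ‖ := by
          rw [hFrep, nsmul]
      _ ≤ (2*Real.pi)⁻¹ * (6*M*(2*Real.pi) + K1 * (n:ℝ)^(r+1) * V) := by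
          rw [hcoef]
          apply mul_le_mul_of_nonneg_left hnormint (by positivity)
      _ = 6*M + (2*Real.pi)⁻¹ * (K1 * (n:ℝ)^(r+1) * V) := by
          have hπ2 : (2*Real.pi) ≠ 0 := by positivity
          field_simp
      _ ≤ 6*M + K1 * ε' * (n:ℝ)^(r+1) := by
          have h2πinv : (2*Real.pi)⁻¹ ≤ 1 := by
            rw [inv_le_one_iff₀]
            right; linarith [Real.pi_gt_three]
          have hnp : (0:ℝ) < (n:ℝ)^(r+1) := Real.rpow_pos_of_pos hnpos _
          have ha : 0 ≤ K1 * (n:ℝ)^(r+1) := mul_nonneg hK1nn hnp.le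
          have hkey : (2*Real.pi)⁻¹ * (K1 * (n:ℝ)^(r+1) * V) ≤ K1 * (n:ℝ)^(r+1) * ε' :=
            calc (2*Real.pi)⁻¹ * (K1 * (n:ℝ)^(r+1) * V) ≤ 1 * (K1 * (n:ℝ)^(r+1) * V) :=
                  mul_le_mul_of_nonneg_right h2πinv (by positivity)
              _ = K1 * (n:ℝ)^(r+1) * V := one_mul _
              _ ≤ K1 * (n:ℝ)^(r+1) * ε' := mul_le_mul_of_nonneg_left hVle ha
          calc 6*M + (2*Real.pi)⁻¹ * (K1 * (n:ℝ)^(r+1) * V)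
              ≤ 6*M + K1 * (n:ℝ)^(r+1) * ε' := by linarith
            _ = 6*M + K1 * ε' * (n:ℝ)^(r+1) := by ring
  -- conclude
  rw [Real.dist_eq, sub_zero]
  have hnp : (0:ℝ) < (n:ℝ)^(r+1) := Real.rpow_pos_of_pos hnpos _
  have hnge : (n:ℝ) ≤ (n:ℝ)^(r+1) := by
    nth_rewrite 1 [← Real.rpow_one (n:ℝ)]
    exact Real.rpow_le_rpow_of_exponent_le hnn1 (by linarith)
  have habs : |‖(T^n : X →L[ℂ] X)‖ / (n:ℝ)^(r+1)| = ‖(T^n : X →L[ℂ] X)‖ / (n:ℝ)^(r+1) :=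
    abs_of_nonneg (by positivity)
  rw [habs]
  have hstep1 : ‖(T^n : X →L[ℂ] X)‖ / (n:ℝ)^(r+1) ≤ 6*M/(n:ℝ)^(r+1) + K1 * ε' := by
    rw [div_le_iff₀ hnp] at *
    calc ‖(T^n : X →L[ℂ] X)‖ ≤ 6*M + K1 * ε' * (n:ℝ)^(r+1) := hTn
      _ = (6*M/(n:ℝ)^(r+1) + K1 * ε') * (n:ℝ)^(r+1) := by
          field_simp
  have hstep2 : 6*M/(n:ℝ)^(r+1) ≤ ε/2 := by
    have h1 : 6*M/(n:ℝ)^(r+1) ≤ 6*M/(n:ℝ) :=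
      div_le_div_of_nonneg_left (by linarith) hnpos hnge
    have h2 : 6*M/(n:ℝ) ≤ ε/2 := by
      rw [div_le_div_iff₀ hnpos (by norm_num : (0:ℝ) < 2)]
      rw [div_lt_iff₀ hε] at hn12M
      linarith
    linarith
  have hstep3 : K1 * ε' < ε/2 := by
    rw [hε']
    rw [mul_comm, div_mul_eq_mul_div, div_lt_div_iff₀ (by positivity : (0:ℝ) < 2*(K1+1))
      (by norm_num : (0:ℝ) < 2)]
    nlinarith [hε, hK1nn]
  linarith
end

section
/- Let r be a nonnegative integer and T ∈ B(X) with sup over all integers n ≥ 1 and all λ ∈ ℂ with |λ| = 1 of n^{−r} ‖M_n(λT)‖ finite. Define the seminorm γ(x) = limsup_{n→∞} ‖M_n^{(r+1)}(T)(T−I)^{r+1} x‖ on X. If there exist a complex Banach space Y and an operator Q ∈ B(X, Y) with closed range such that ‖Q x‖ = γ(x) for all x ∈ X, then ‖T^n x‖ / n^{r+1} → 0 as n → ∞ for every x ∈ X. -/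
set_option maxHeartbeats 1600000
open Filter Topology

/-- The Cesàro mean of order p of an operator S:
M_n^{(p)}(S) = (p/((n+1)⋯(n+p))) Σ_{j=0}^n ((n−j+p−1)!/(n−j)!) S^j. -/
noncomputable def cesaroMean {X : Type*} [NormedAddCommGroup X] [NormedSpace ℂ X]
    (p : ℕ) (S : X →L[ℂ] X) (n : ℕ) : X →L[ℂ] X :=
  ((p : ℂ) / ∏ i ∈ Finset.range p, ((n : ℂ) + 1 + i)) •
    ∑ j ∈ Finset.range (n + 1),
      (((n - j + p - 1).factorial : ℂ) / ((n - j).factorial : ℂ)) • S ^ j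

open Finset

section LimsupHelpers
private lemma aux_limsup_le {u v e : ℕ → ℝ} {M : ℝ}
    (hu0 : ∀ n, 0 ≤ u n) (hv0 : ∀ n, 0 ≤ v n) (hvM : ∀ n, v n ≤ M)
    (hd : ∀ n, u n - v n ≤ e n) (he : Tendsto e atTop (𝓝 0)) :
    limsup u atTop ≤ limsup v atTop := by
  have huc : IsCoboundedUnder (· ≤ ·) atTop u :=
    (isBoundedUnder_of ⟨0, hu0⟩ : IsBoundedUnder (· ≥ ·) atTop u).isCoboundedUnder_le
  have hvb : IsBoundedUnder (· ≤ ·) atTop v := isBoundedUnder_of ⟨M, hvM⟩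
  have hvc : IsCoboundedUnder (· ≤ ·) atTop v :=
    (isBoundedUnder_of ⟨0, hv0⟩ : IsBoundedUnder (· ≥ ·) atTop v).isCoboundedUnder_le
  refine le_of_forall_pos_le_add fun ε hε => ?_
  have hev : ∀ᶠ n in atTop, u n ≤ v n + ε := by
    filter_upwards [he.eventually (eventually_le_nhds hε)] with n hn
    have := hd n; linarith
  have hb2 : IsBoundedUnder (· ≤ ·) atTop (fun n => v n + ε) :=
    isBoundedUnder_of ⟨M + ε, fun n => by have := hvM n; linarith⟩
  calc limsup u atTop ≤ limsup (fun n => v n + ε) atTop := limsup_le_limsup hev huc hb2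
    _ = limsup v atTop + ε := limsup_add_const atTop v ε hvb hvc

lemma limsup_eq_of_sub_le {u v e : ℕ → ℝ} {M : ℝ}
    (hu0 : ∀ n, 0 ≤ u n) (hv0 : ∀ n, 0 ≤ v n)
    (huM : ∀ n, u n ≤ M) (hvM : ∀ n, v n ≤ M)
    (hd : ∀ n, |u n - v n| ≤ e n) (he : Tendsto e atTop (𝓝 0)) :
    limsup u atTop = limsup v atTop := by
  refine le_antisymm
    (aux_limsup_le hu0 hv0 hvM (fun n => (abs_le.mp (hd n)).2) he)
    (aux_limsup_le hv0 hu0 huM (fun n => ?_) he)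
  have := (abs_le.mp (hd n)).1; linarith

lemma limsup_le_of_le_tendsto {u w : ℕ → ℝ} {c : ℝ}
    (hu0 : ∀ n, 0 ≤ u n) (h : ∀ n, u n ≤ w n) (hw : Tendsto w atTop (𝓝 c)) :
    limsup u atTop ≤ c := by
  have huc : IsCoboundedUnder (· ≤ ·) atTop u :=
    (isBoundedUnder_of ⟨0, hu0⟩ : IsBoundedUnder (· ≥ ·) atTop u).isCoboundedUnder_le
  have h2 : limsup u atTop ≤ limsup w atTop :=
    limsup_le_limsup (Eventually.of_forall h) huc hw.isBoundedUnder_le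
  rwa [hw.limsup_eq] at h2

lemma tendsto_zero_of_limsup_zero {u : ℕ → ℝ} {M : ℝ}
    (hu0 : ∀ n, 0 ≤ u n) (huM : ∀ n, u n ≤ M) (h : limsup u atTop = 0) :
    Tendsto u atTop (𝓝 0) := by
  refine tendsto_of_le_liminf_of_limsup_le ?_ (le_of_eq h)
    (isBoundedUnder_of ⟨M, huM⟩) (isBoundedUnder_of ⟨0, hu0⟩)
  exact le_liminf_of_le
    ((isBoundedUnder_of ⟨M, huM⟩ : IsBoundedUnder (· ≤ ·) atTop u).isCoboundedUnder_ge)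
    (Eventually.of_forall hu0)

lemma tendsto_ratio_aux (a : ℝ) : Tendsto (fun n : ℕ => ((n : ℝ) + a) / ((n : ℝ) + 1))
    atTop (𝓝 1) := by
  have h1 : Tendsto (fun n : ℕ => (n : ℝ) + 1) atTop atTop :=
    tendsto_atTop_add_const_right _ _ tendsto_natCast_atTop_atTop
  have h2 : Tendsto (fun n : ℕ => (a - 1) / ((n : ℝ) + 1)) atTop (𝓝 0) :=
    Tendsto.div_atTop tendsto_const_nhds h1
  have h3 : ∀ᶠ n : ℕ in atTop, (a - 1) / ((n : ℝ) + 1) + 1 = ((n : ℝ) + a) / ((n : ℝ) + 1) := by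
    filter_upwards with n
    have hn : ((n : ℝ) + 1) ≠ 0 := by positivity
    field_simp
    ring
  have h4 := h2.add_const 1
  rw [zero_add] at h4
  exact Tendsto.congr' h3 h4
end LimsupHelpers

section Comb

variable {X : Type*} [NormedAddCommGroup X] [NormedSpace ℂ X]

/-- `HH T q n = ∑_{j≤n} C(n-j+q, q) T^j`. -/
noncomputable def HH (T : X →L[ℂ] X) (q n : ℕ) : X →L[ℂ] X :=
  ∑ j ∈ range (n + 1), (((n - j + q).choose q : ℕ) : ℂ) • T ^ j

lemma HH_succ (T : X →L[ℂ] X) (q : ℕ) (n : ℕ) :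
    HH T (q + 1) n = ∑ m ∈ range (n + 1), HH T q m := by
  induction n with
  | zero => simp [HH]
  | succ n ih =>
    rw [sum_range_succ, ← ih]
    unfold HH
    rw [sum_range_succ, sum_range_succ (fun j => (((n + 1 - j + q).choose q : ℕ) : ℂ) • T ^ j)]
    have hs : ∑ x ∈ range (n+1), (((n + 1 - x + (q+1)).choose (q+1) : ℕ) : ℂ) • T ^ x
        = ∑ j ∈ range (n+1), ((((n - j + (q+1)).choose (q+1) : ℕ) : ℂ) • T ^ j)
          + ∑ x ∈ range (n+1), (((n + 1 - x + q).choose q : ℕ) : ℂ) • T ^ x := by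
      rw [← sum_add_distrib]
      refine sum_congr rfl fun j hj => ?_
      rw [← add_smul]
      congr 1
      rw [mem_range] at hj
      have hpas : (n + 1 - j + (q+1)).choose (q+1)
          = (n - j + (q+1)).choose (q+1) + (n + 1 - j + q).choose q := by
        have e1 : n + 1 - j + (q + 1) = (n - j + q + 1) + 1 := by omega
        have e2 : n - j + (q + 1) = n - j + q + 1 := by omega
        have e3 : n + 1 - j + q = n - j + q + 1 := by omega
        rw [e1, e2, e3, Nat.choose_succ_succ' (n - j + q + 1) q]
        omega
      rw [hpas]; push_cast; ring
    rw [hs]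
    have hc : ((n + 1 - (n + 1) + (q + 1)).choose (q + 1) : ℕ)
        = ((n + 1 - (n + 1) + q).choose q : ℕ) := by simp
    rw [hc]; abel

lemma key_identity (T : X →L[ℂ] X) (q : ℕ) :
    ∃ a : ℕ → ℕ → ℂ,
      (∀ n m, ‖a n m‖ ≤ 3 ^ (q + 1) * ((n : ℝ) + 1) ^ q) ∧
      ∀ n, HH T q n * (T - 1) ^ (q + 1) =
        T ^ (n + q + 1) + ∑ m ∈ range (q + 1), a n m • T ^ m := by
  induction q with
  | zero =>
    refine ⟨fun _ _ => -1, fun n m => by rw [norm_neg, norm_one]; norm_num, fun n => ?_⟩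
    have h0 : HH T 0 n = ∑ j ∈ range (n + 1), T ^ j := by
      unfold HH; exact sum_congr rfl fun j hj => by simp
    rw [h0, pow_one, geom_sum_mul, sum_range_one]
    simp [sub_eq_add_neg]
  | succ q ih =>
    obtain ⟨a, ha, hid⟩ := ih
    set b : ℕ → ℕ → ℂ := fun n i => ∑ m ∈ range (n + 1), a m i with hb
    have hbdef : ∀ n i, b n i = ∑ m ∈ range (n + 1), a m i := fun n i => rfl
    have hbnd : ∀ n i, ‖b n i‖ ≤ 3 ^ (q + 1) * ((n : ℝ) + 1) ^ (q + 1) := by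
      intro n i
      calc ‖b n i‖ ≤ ∑ m ∈ range (n + 1), ‖a m i‖ := norm_sum_le _ _
        _ ≤ ∑ m ∈ range (n + 1), 3 ^ (q + 1) * ((n : ℝ) + 1) ^ q := by
            refine sum_le_sum fun m hm => le_trans (ha m i) ?_
            have hmn : (m : ℝ) ≤ (n : ℝ) := by
              rw [mem_range] at hm; exact_mod_cast Nat.lt_succ_iff.mp hm
            gcongr <;> linarith
        _ = ((n : ℝ) + 1) * (3 ^ (q + 1) * ((n : ℝ) + 1) ^ q) := by
            rw [sum_const, card_range]; push_cast; ring
        _ = 3 ^ (q + 1) * ((n : ℝ) + 1) ^ (q + 1) := by ring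
    refine ⟨fun n j => (if j = q + 1 then (-1 : ℂ) else 0) +
        (if j = 0 then 0 else b n (j - 1)) - (if j ≤ q then b n j else 0), ?_, ?_⟩
    · intro n m
      have h1 : ‖(if m = q + 1 then (-1 : ℂ) else 0)‖ ≤ 1 := by
        split
        · rw [norm_neg, norm_one]
        · rw [norm_zero]; norm_num
      have h2 : ‖(if m = 0 then (0:ℂ) else b n (m - 1))‖ ≤ 3 ^ (q+1) * ((n : ℝ) + 1) ^ (q+1) := by
        split
        · rw [norm_zero]; positivity
        · exact hbnd n (m-1)
      have h3 : ‖(if m ≤ q then b n m else 0)‖ ≤ 3 ^ (q+1) * ((n : ℝ) + 1) ^ (q+1) := by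
        split
        · exact hbnd n m
        · rw [norm_zero]; positivity
      have hone : (1:ℝ) ≤ 3 ^ (q+1) * ((n : ℝ) + 1) ^ (q+1) := by
        have ha1 : (1:ℝ) ≤ 3 ^ (q+1) := one_le_pow₀ (by norm_num)
        have ha2 : (1:ℝ) ≤ ((n : ℝ) + 1) ^ (q+1) := one_le_pow₀ (by linarith [Nat.cast_nonneg (α := ℝ) n])
        nlinarith
      have tri : ‖(if m = q + 1 then (-1 : ℂ) else 0) +
          (if m = 0 then 0 else b n (m - 1)) - (if m ≤ q then b n m else 0)‖
          ≤ ‖(if m = q + 1 then (-1 : ℂ) else 0)‖ + ‖(if m = 0 then (0:ℂ) else b n (m - 1))‖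
            + ‖(if m ≤ q then b n m else 0)‖ := by
        refine le_trans (norm_sub_le _ _) ?_
        have := norm_add_le (if m = q + 1 then (-1 : ℂ) else 0)
          (if m = 0 then (0:ℂ) else b n (m - 1))
        linarith
      have h3q : (3:ℝ) ^ (q+1+1) = 3 * 3 ^ (q+1) := by ring
      calc ‖_‖ ≤ _ := tri
        _ ≤ 1 + 3 ^ (q+1) * ((n : ℝ) + 1) ^ (q+1) + 3 ^ (q+1) * ((n : ℝ) + 1) ^ (q+1) := by
            linarith
        _ ≤ 3 ^ (q + 1 + 1) * ((n : ℝ) + 1) ^ (q + 1) := by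
            rw [h3q]; nlinarith
    · intro n
      have expand : HH T (q+1) n * (T - 1) ^ (q + 1 + 1) =
          (∑ m ∈ range (n+1), HH T q m * (T - 1) ^ (q+1)) * (T - 1) := by
        rw [HH_succ T q n, pow_succ, ← mul_assoc, sum_mul]
      rw [expand]
      have step1 : (∑ m ∈ range (n+1), HH T q m * (T - 1) ^ (q+1)) =
          (∑ m ∈ range (n+1), T ^ (m + q + 1)) + ∑ i ∈ range (q+1), b n i • T ^ i := by
        simp only [hid, sum_add_distrib]
        congr 1
        rw [sum_comm]
        exact sum_congr rfl fun i _ => by simp only [hbdef]; rw [sum_smul]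
      rw [step1, add_mul]
      have geo : (∑ m ∈ range (n+1), T ^ (m + q + 1)) * (T - 1) =
          T ^ (n + (q+1) + 1) - T ^ (q + 1) := by
        have e0 : (∑ m ∈ range (n+1), T ^ (m + q + 1)) =
            (∑ m ∈ range (n+1), T ^ m) * T ^ (q+1) := by
          rw [sum_mul]
          exact sum_congr rfl fun m hm => by rw [← pow_add, add_assoc]
        rw [e0]
        have comm : (∑ m ∈ range (n+1), T ^ m) * T ^ (q+1) * (T - 1)
            = (∑ m ∈ range (n+1), T ^ m) * (T - 1) * T ^ (q+1) := by
          rw [mul_assoc, mul_assoc]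
          congr 1
          exact (Commute.sub_right ((Commute.refl T).pow_left (q+1)) (Commute.one_right _)).eq
        rw [comm, geom_sum_mul, sub_mul, one_mul, ← pow_add,
          show n + 1 + (q+1) = n + (q+1) + 1 from by omega]
      rw [geo]
      have low : (∑ i ∈ range (q+1), b n i • T ^ i) * (T - 1) =
          (∑ i ∈ range (q+1), b n i • T ^ (i+1)) - (∑ i ∈ range (q+1), b n i • T ^ i) := by
        rw [sum_mul, ← sum_sub_distrib]
        refine sum_congr rfl fun i hi => ?_
        rw [smul_mul_assoc, mul_sub, mul_one, smul_sub, ← pow_succ]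
      rw [low]
      have c1 : ∑ j ∈ range (q+1+1), (if j = q+1 then (-1:ℂ) else 0) • T ^ j
          = - T ^ (q+1) := by
        rw [Finset.sum_eq_single (q+1)
          (fun j hj hne => by rw [if_neg hne, zero_smul])
          (fun h => absurd (self_mem_range_succ (q+1)) h)]
        rw [if_pos rfl, neg_smul, one_smul]
      have c2 : ∑ j ∈ range (q+1+1), (if j = 0 then (0:ℂ) else b n (j-1)) • T ^ j
          = ∑ i ∈ range (q+1), b n i • T ^ (i+1) := by
        rw [Finset.sum_range_succ' (fun j => (if j = 0 then (0:ℂ) else b n (j - 1)) • T ^ j)]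
        rw [if_pos rfl, zero_smul, add_zero]
        exact sum_congr rfl fun i hi => by simp
      have c3 : ∑ j ∈ range (q+1+1), (if j ≤ q then b n j else 0) • T ^ j
          = ∑ i ∈ range (q+1), b n i • T ^ i := by
        rw [sum_range_succ, if_neg (by omega : ¬ (q+1 ≤ q)), zero_smul, add_zero]
        refine sum_congr rfl fun i hi => ?_
        rw [mem_range] at hi
        rw [if_pos (by omega)]
      have expand2 : ∀ j ∈ range (q+1+1), ((if j = q+1 then (-1:ℂ) else 0) +
          (if j = 0 then 0 else b n (j-1)) - (if j ≤ q then b n j else 0)) • T ^ j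
          = (if j = q+1 then (-1:ℂ) else 0) • T^j + (if j = 0 then (0:ℂ) else b n (j-1)) • T^j
            - (if j ≤ q then b n j else 0) • T^j := fun j _ => by rw [sub_smul, add_smul]
      rw [sum_congr rfl expand2, sum_sub_distrib, sum_add_distrib, c1, c2, c3]
      abel

end Comb

/-- An invertible-spectrum contradiction: a power-isometric operator on a nontrivial complex
Banach space cannot have all its rotated Cesàro averages of small norm. -/
lemma spec_contra {E : Type*} [NormedAddCommGroup E] [NormedSpace ℂ E] [CompleteSpace E]
    [Nontrivial E] (U : E →L[ℂ] E) (hiso : ∀ (k : ℕ) (y : E), ‖(U ^ k) y‖ = ‖y‖)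
    (hsmall : ∀ (ν : ℂ), ‖ν‖ = 1 → ∃ d : ℕ,
      ‖∑ j ∈ Finset.range (d + 1), ((((d : ℕ) : ℂ) + 1)⁻¹ * ν⁻¹ ^ j) • U ^ j‖ < 1) :
    False := by
  haveI : Nontrivial (E →L[ℂ] E) := by
    refine ⟨⟨1, 0, fun h => ?_⟩⟩
    obtain ⟨y₀, hy₀⟩ := exists_ne (0 : E)
    apply hy₀
    have := congrFun (congrArg (DFunLike.coe) h) y₀
    simpa using this
  have hUk1 : ∀ k : ℕ, ‖U ^ k‖ = 1 := by
    intro k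
    refine le_antisymm (ContinuousLinearMap.opNorm_le_bound _ zero_le_one
      (fun y => by rw [hiso k y, one_mul])) ?_
    obtain ⟨y₀, hy₀⟩ := exists_ne (0 : E)
    have hy₀n : 0 < ‖y₀‖ := norm_pos_iff.mpr hy₀
    have h1 := (U ^ k).le_opNorm y₀
    rw [hiso k y₀] at h1
    exact (le_mul_iff_one_le_left hy₀n).mp h1
  have hsr : spectralRadius ℂ U = 1 := by
    have hgel := spectrum.pow_nnnorm_pow_one_div_tendsto_nhds_spectralRadius U
    have hconst : (fun n : ℕ => ((‖U ^ n‖₊ : NNReal) : ENNReal) ^ (1 / (n:ℝ)))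
        = fun _ => (1 : ENNReal) := by
      funext n
      have h1 : ‖U ^ n‖₊ = 1 := by
        have := hUk1 n
        ext
        simpa using this
      rw [h1]
      simp
    rw [hconst] at hgel
    exact tendsto_nhds_unique hgel tendsto_const_nhds
  obtain ⟨ν, hνmem, hνsr⟩ := spectrum.exists_nnnorm_eq_spectralRadius (a := U)
  have hν1 : ‖ν‖ = 1 := by
    rw [hsr] at hνsr
    have h2 : ‖ν‖₊ = 1 := by exact_mod_cast hνsr
    calc ‖ν‖ = ((‖ν‖₊ : NNReal) : ℝ) := rfl
      _ = 1 := by rw [h2]; rfl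
  have hν0 : ν ≠ 0 := by
    intro h
    rw [h, norm_zero] at hν1
    norm_num at hν1
  obtain ⟨d, hdlt⟩ := hsmall ν hν1
  have hd1 : ((d:ℂ)+1) ≠ 0 := by
    have := Nat.cast_add_one_ne_zero (R := ℂ) d
    exact_mod_cast this
  set qp : Polynomial ℂ :=
    ∑ j ∈ Finset.range (d+1), Polynomial.C (((d:ℂ)+1)⁻¹ * ν⁻¹ ^ j) * Polynomial.X ^ j with hqp
  have heval : Polynomial.eval ν qp = 1 := by
    rw [hqp, Polynomial.eval_finset_sum]
    have h3 : ∀ j ∈ Finset.range (d+1),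
        Polynomial.eval ν (Polynomial.C (((d:ℂ)+1)⁻¹ * ν⁻¹ ^ j) * Polynomial.X ^ j)
        = ((d:ℂ)+1)⁻¹ := by
      intro j hj
      rw [Polynomial.eval_mul, Polynomial.eval_C, Polynomial.eval_pow, Polynomial.eval_X]
      rw [mul_assoc, ← mul_pow, inv_mul_cancel₀ hν0, one_pow, mul_one]
    rw [Finset.sum_congr rfl h3, Finset.sum_const, Finset.card_range, nsmul_eq_mul]
    push_cast
    rw [mul_inv_cancel₀ hd1]
  have hMopform : Polynomial.aeval U qp
      = ∑ j ∈ Finset.range (d+1), (((d:ℂ)+1)⁻¹ * ν⁻¹ ^ j) • U ^ j := by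
    rw [hqp, map_sum]
    refine Finset.sum_congr rfl fun j hj => ?_
    rw [map_mul, Polynomial.aeval_C, Polynomial.aeval_X_pow, Algebra.smul_def]
  have hmem1 : (1:ℂ) ∈ spectrum ℂ (Polynomial.aeval U qp) :=
    spectrum.subset_polynomial_aeval U qp ⟨ν, hνmem, heval⟩
  have hge1 : (1:ℝ) ≤ ‖Polynomial.aeval U qp‖ := by
    have := spectrum.norm_le_norm_of_mem hmem1
    simpa using this
  rw [hMopform] at hge1
  linarith

/-- Suppose sup_{n≥1,|λ|=1} n^{−r} ‖M_n(λT)‖ < ∞ for a nonnegative integer r, and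
let γ(x) = limsup_n ‖M_n^{(r+1)}(T)(T−I)^{r+1} x‖. If there is a complex Banach
space Y and Q ∈ B(X,Y) with closed range and ‖Q x‖ = γ(x) for all x, then
‖T^n x‖ = o(n^{r+1}) for every x ∈ X. -/
theorem stmt18 {X : Type*} [NormedAddCommGroup X] [NormedSpace ℂ X] [CompleteSpace X]
    (T : X →L[ℂ] X)
    (r : ℕ)
    (hbdd : ∃ C : ℝ, ∀ n : ℕ, 1 ≤ n → ∀ lam : ℂ, ‖lam‖ = 1 →
      ‖cesaroMean 1 (lam • T) n‖ ≤ C * (n : ℝ) ^ r)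
    {Y : Type*} [NormedAddCommGroup Y] [NormedSpace ℂ Y] [CompleteSpace Y]
    (Q : X →L[ℂ] Y)
    (hQrange : IsClosed (Set.range ⇑Q))
    (hQnorm : ∀ x : X,
      ‖Q x‖ = limsup (fun n => ‖cesaroMean (r + 1) T n (((T - 1) ^ (r + 1)) x)‖) atTop) :
    ∀ x : X, Tendsto (fun n : ℕ => ‖(T ^ n) x‖ / (n : ℝ) ^ (r + 1)) atTop (𝓝 0) := by
  obtain ⟨C, hC⟩ := hbdd
  have hC0 : 0 ≤ C := by
    have h := hC 1 le_rfl 1 (by simp)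
    have := norm_nonneg (cesaroMean 1 ((1:ℂ) • T) 1)
    simp only [Nat.cast_one, one_pow, mul_one] at h
    linarith
  -- Partial sum bound, for all unimodular lam
  have hSU : ∀ lam : ℂ, ‖lam‖ = 1 → ∀ m : ℕ,
      ‖∑ k ∈ range (m + 1), lam ^ k • T ^ k‖ ≤ (C + 1) * ((m : ℝ) + 1) ^ (r + 1) := by
    intro lam hlam m
    have hsum : (∑ k ∈ range (m + 1), lam ^ k • T ^ k) = ∑ k ∈ range (m + 1), (lam • T) ^ k :=
      sum_congr rfl fun k _ => (smul_pow lam T k).symm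
    rw [hsum]
    rcases Nat.eq_zero_or_pos m with hm | hm
    · subst hm
      rw [sum_range_one, pow_zero]
      have h1 : ‖(1 : X →L[ℂ] X)‖ ≤ 1 := by
        rw [ContinuousLinearMap.one_def]; exact ContinuousLinearMap.norm_id_le
      have h2 : (1:ℝ) ≤ (C + 1) * (((0:ℕ):ℝ) + 1) ^ (r + 1) := by
        norm_num; linarith
      linarith
    · have hces : cesaroMean 1 (lam • T) m
          = (((m : ℂ) + 1)⁻¹) • ∑ j ∈ range (m + 1), (lam • T) ^ j := by
        unfold cesaroMean
        rw [prod_range_one]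
        push_cast
        rw [add_zero, div_eq_mul_inv, one_mul]
        congr 1
        refine sum_congr rfl fun j hj => ?_
        rw [div_self (by exact_mod_cast (Nat.factorial_pos (m - j)).ne'
          : (((m - j).factorial : ℂ)) ≠ 0), one_smul]
      have hval := hC m hm lam hlam
      have hnc : ‖((m : ℂ) + 1)⁻¹‖ = ((m : ℝ) + 1)⁻¹ := by
        rw [norm_inv]
        congr 1
        have h9 : ((m : ℂ) + 1) = ((m + 1 : ℕ) : ℂ) := by push_cast; ring
        rw [h9, Complex.norm_natCast]
        push_cast; ring
      have heq : ‖cesaroMean 1 (lam • T) m‖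
          = ((m:ℝ)+1)⁻¹ * ‖∑ j ∈ range (m + 1), (lam • T) ^ j‖ := by
        rw [hces, ← hnc]
        exact norm_smul (((m:ℂ) + 1)⁻¹) (∑ j ∈ range (m + 1), (lam • T) ^ j)
      rw [heq] at hval
      have hmpos : (0:ℝ) < (m:ℝ) + 1 := by positivity
      have h2 : ‖∑ j ∈ range (m + 1), (lam • T) ^ j‖ ≤ ((m:ℝ) + 1) * (C * (m:ℝ) ^ r) := by
        rw [inv_mul_le_iff₀ hmpos] at hval
        exact hval
      refine le_trans h2 ?_
      have h3 : (m:ℝ) ^ r ≤ ((m:ℝ) + 1) ^ r := by gcongr; linarith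
      have h4 : ((m:ℝ)+1) * (C * (m:ℝ)^r) ≤ C * ((m:ℝ)+1)^(r+1) := by
        rw [pow_succ]
        have h6 := mul_le_mul_of_nonneg_left h3 hC0
        have h7 := mul_le_mul_of_nonneg_right h6 (le_of_lt hmpos)
        nlinarith [h7]
      have h5 : C * ((m:ℝ)+1)^(r+1) ≤ (C+1) * ((m:ℝ)+1)^(r+1) := by
        have := pow_nonneg (by positivity : (0:ℝ) ≤ (m:ℝ)+1) (r+1)
        nlinarith
      linarith
  -- Power growth bound
  set D : ℝ := 2 * (C + 1) + 1 with hDdef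
  have hD0 : 0 < D := by simp only [hDdef]; linarith
  have hD : ∀ m : ℕ, ‖T ^ m‖ ≤ D * ((m : ℝ) + 1) ^ (r + 1) := by
    intro m
    have hone : (1:ℝ) ≤ ((m : ℝ) + 1) ^ (r + 1) :=
      one_le_pow₀ (le_add_of_nonneg_left (Nat.cast_nonneg m))
    rcases m with _ | k
    · have h1 : ‖(1 : X →L[ℂ] X)‖ ≤ 1 := by
        rw [ContinuousLinearMap.one_def]; exact ContinuousLinearMap.norm_id_le
      simp only [pow_zero]
      nlinarith
    · have hS1 := hSU 1 (by simp) (k + 1)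
      have hS0 := hSU 1 (by simp) k
      simp only [one_pow, one_smul] at hS1 hS0
      have hdec : T ^ (k+1) = (∑ j ∈ range (k + 1 + 1), T ^ j) - (∑ j ∈ range (k + 1), T ^ j) := by
        rw [sum_range_succ]; abel
      rw [hdec]
      refine le_trans (norm_sub_le _ _) ?_
      have hmono : ((k:ℝ) + 1) ^ (r+1) ≤ ((k:ℝ) + 1 + 1) ^ (r+1) := by gcongr <;> linarith
      have hcast : (((k:ℕ)+1:ℕ):ℝ) = (k:ℝ) + 1 := by push_cast; ring
      rw [hcast] at hS1
      have : ‖∑ j ∈ range (k+1+1), T ^ j‖ + ‖∑ j ∈ range (k+1), T ^ j‖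
          ≤ 2 * (C+1) * ((k:ℝ) + 1 + 1)^(r+1) := by
        have := le_trans hS0 (by nlinarith : (C+1) * ((k:ℝ)+1)^(r+1) ≤ (C+1) * ((k:ℝ)+1+1)^(r+1))
        linarith
      have hcast2 : (((k+1:ℕ)):ℝ) + 1 = (k:ℝ) + 1 + 1 := by push_cast; ring
      rw [hcast2]
      have hpn : (0:ℝ) ≤ ((k:ℝ)+1+1)^(r+1) := by positivity
      nlinarith
  -- the key identity data
  obtain ⟨a, ha, hkey⟩ := key_identity T r
  -- real scalar
  set ρ : ℕ → ℝ := fun n => (((r+1).factorial : ℝ)) / ∏ i ∈ range (r + 1), ((n : ℝ) + 1 + i)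
    with hρdef
  have hprodpos : ∀ n : ℕ, (0:ℝ) < ∏ i ∈ range (r + 1), ((n : ℝ) + 1 + i) := by
    intro n
    exact prod_pos fun i _ => by positivity
  have hρpos : ∀ n : ℕ, 0 < ρ n := fun n => div_pos (by exact_mod_cast (r+1).factorial_pos) (hprodpos n)
  have hprod_lb : ∀ n : ℕ, ((n:ℝ) + 1) ^ (r+1) ≤ ∏ i ∈ range (r + 1), ((n : ℝ) + 1 + i) := by
    intro n
    have : ((n:ℝ)+1)^(r+1) = ∏ _i ∈ range (r+1), ((n:ℝ)+1) := by
      rw [prod_const, card_range]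
    rw [this]
    exact prod_le_prod (fun i _ => by positivity)
      (fun i _ => le_add_of_nonneg_right (Nat.cast_nonneg i))
  have hprod_ub : ∀ n : ℕ, (∏ i ∈ range (r + 1), ((n : ℝ) + 1 + i)) ≤ ((n:ℝ) + 1 + r) ^ (r+1) := by
    intro n
    have : ((n:ℝ)+1+r)^(r+1) = ∏ _i ∈ range (r+1), ((n:ℝ)+1+r) := by
      rw [prod_const, card_range]
    rw [this]
    refine prod_le_prod (fun i _ => by positivity) (fun i hi => ?_)
    rw [mem_range] at hi
    have : (i:ℝ) ≤ r := by exact_mod_cast Nat.lt_succ_iff.mp hi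
    linarith
  have hρ_ub : ∀ n : ℕ, ρ n ≤ ((r+1).factorial : ℝ) / ((n:ℝ)+1)^(r+1) := by
    intro n
    rw [hρdef]
    exact div_le_div_of_nonneg_left (by positivity) (by positivity) (hprod_lb n)
  have hρ_lb : ∀ n : ℕ, ((r+1).factorial : ℝ) / ((n:ℝ)+1+r)^(r+1) ≤ ρ n := by
    intro n
    rw [hρdef]
    exact div_le_div_of_nonneg_left (by positivity) (hprodpos n) (hprod_ub n)
  -- cesaroMean in terms of HH
  have hcesaroHH : ∀ n : ℕ, cesaroMean (r + 1) T n = ((ρ n : ℝ) : ℂ) • HH T r n := by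
    intro n
    unfold cesaroMean HH
    have hfac : ∀ j ∈ range (n+1),
        (((n - j + (r+1) - 1).factorial : ℂ) / ((n - j).factorial : ℂ)) • T ^ j
        = ((r.factorial : ℂ)) • ((((n - j + r).choose r : ℕ) : ℂ) • T ^ j) := by
      intro j hj
      rw [smul_smul]
      congr 1
      have e1 : n - j + (r+1) - 1 = n - j + r := by omega
      rw [e1]
      have e2 : ((n - j + r).choose r) * r.factorial * (n - j).factorial
          = (n - j + r).factorial := by
        have := Nat.choose_mul_factorial_mul_factorial (show r ≤ n - j + r by omega)
        simpa [Nat.add_sub_cancel] using this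
      have hne : ((n - j).factorial : ℂ) ≠ 0 := by
        exact_mod_cast (Nat.factorial_pos (n-j)).ne'
      field_simp
      rw [← e2]; push_cast; ring
    rw [sum_congr rfl hfac, ← smul_sum, smul_smul]
    congr 1
    have hcast : (∏ i ∈ range (r+1), ((n:ℂ) + 1 + i))
        = (((∏ i ∈ range (r+1), ((n:ℝ) + 1 + i)) : ℝ) : ℂ) := by
      push_cast; rfl
    rw [hcast, hρdef]
    have hne : ((((∏ i ∈ range (r+1), ((n:ℝ) + 1 + i)) : ℝ)) : ℂ) ≠ 0 := by
      exact_mod_cast (hprodpos n).ne'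
    push_cast
    field_simp
    rw [mul_comm]
    norm_cast
    rw [mul_comm (r.factorial) (r+1)]
    rfl
  -- pointwise formula
  have happ : ∀ (x : X) (n : ℕ), cesaroMean (r + 1) T n (((T - 1) ^ (r + 1)) x)
      = ((ρ n : ℝ) : ℂ) • ((T ^ (n + r + 1)) x + ∑ m ∈ range (r + 1), a n m • (T ^ m) x) := by
    intro x n
    have h1 : cesaroMean (r + 1) T n (((T - 1) ^ (r + 1)) x)
        = (cesaroMean (r + 1) T n * (T - 1) ^ (r + 1)) x :=
      (ContinuousLinearMap.mul_apply _ _ _).symm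
    rw [h1, hcesaroHH n, smul_mul_assoc, hkey n]
    simp only [ContinuousLinearMap.smul_apply, ContinuousLinearMap.add_apply,
      ContinuousLinearMap.sum_apply]
  set MT : ℝ := ∑ m ∈ range (r + 1), ‖T ^ m‖ with hMTdef
  have hMT0 : 0 ≤ MT := sum_nonneg fun _ _ => norm_nonneg _
  set KR : ℝ := ((r+1).factorial : ℝ) * 3 ^ (r+1) * MT with hKRdef
  have hKR0 : 0 ≤ KR := by positivity
  set Mv : ℝ := ((r+1).factorial : ℝ) * D * ((r:ℝ) + 2) ^ (r+1) with hMvdef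
  have hMv0 : 0 ≤ Mv := by positivity
  have hnormsmul : ∀ (n : ℕ) (w : X), ‖((ρ n : ℝ) : ℂ) • w‖ = ρ n * ‖w‖ := by
    intro n w
    rw [norm_smul ((ρ n : ℝ) : ℂ) w, Complex.norm_real, Real.norm_eq_abs, abs_of_pos (hρpos n)]
  have hdiff : ∀ (x : X) (n : ℕ),
      |‖cesaroMean (r + 1) T n (((T - 1) ^ (r + 1)) x)‖ - ρ n * ‖(T ^ (n + r + 1)) x‖|
        ≤ KR * ‖x‖ / ((n:ℝ)+1) := by
    intro x n
    rw [happ x n, hnormsmul n _]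
    set w1 := (T ^ (n + r + 1)) x
    set w2 := ∑ m ∈ range (r + 1), a n m • (T ^ m) x with hw2
    have h8 : |‖w1 + w2‖ - ‖w1‖| ≤ ‖w2‖ := by
      simpa using abs_norm_sub_norm_le (w1 + w2) w1
    have hw2b : ‖w2‖ ≤ 3 ^ (r+1) * ((n:ℝ)+1)^r * MT * ‖x‖ := by
      rw [hw2]
      refine le_trans (norm_sum_le _ _) ?_
      have hterm : ∀ m ∈ range (r+1), ‖a n m • (T ^ m) x‖
          ≤ (3 ^ (r+1) * ((n:ℝ)+1)^r) * (‖T ^ m‖ * ‖x‖) := by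
        intro m hm
        rw [norm_smul]
        exact mul_le_mul (ha n m) ((T ^ m).le_opNorm x) (norm_nonneg _) (by positivity)
      refine le_trans (sum_le_sum hterm) ?_
      rw [← mul_sum, ← sum_mul]
      exact le_of_eq (by rw [hMTdef]; ring)
    have habs : |ρ n * ‖w1 + w2‖ - ρ n * ‖w1‖| = ρ n * |‖w1 + w2‖ - ‖w1‖| := by
      rw [← mul_sub, abs_mul, abs_of_pos (hρpos n)]
    rw [habs]
    have h9 : ρ n * ((n:ℝ)+1)^r ≤ ((r+1).factorial : ℝ) / ((n:ℝ)+1) := by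
      have hp : (0:ℝ) < ((n:ℝ)+1)^r := by positivity
      have h := mul_le_mul_of_nonneg_right (hρ_ub n) (le_of_lt hp)
      have he : ((r+1).factorial : ℝ)/((n:ℝ)+1)^(r+1) * ((n:ℝ)+1)^r
          = ((r+1).factorial : ℝ)/((n:ℝ)+1) := by
        rw [pow_succ]
        field_simp
      rw [he] at h
      exact h
    calc ρ n * |‖w1 + w2‖ - ‖w1‖| ≤ ρ n * ‖w2‖ :=
          mul_le_mul_of_nonneg_left h8 (le_of_lt (hρpos n))
      _ ≤ ρ n * (3 ^ (r+1) * ((n:ℝ)+1)^r * MT * ‖x‖) :=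
          mul_le_mul_of_nonneg_left hw2b (le_of_lt (hρpos n))
      _ = (ρ n * ((n:ℝ)+1)^r) * (3 ^ (r+1) * MT * ‖x‖) := by ring
      _ ≤ (((r+1).factorial : ℝ) / ((n:ℝ)+1)) * (3 ^ (r+1) * MT * ‖x‖) := by
          have : (0:ℝ) ≤ 3 ^ (r+1) * MT * ‖x‖ := by positivity
          exact mul_le_mul_of_nonneg_right h9 this
      _ = KR * ‖x‖ / ((n:ℝ)+1) := by
          rw [hKRdef]
          field_simp
  have hvM : ∀ (x : X) (n : ℕ), ρ n * ‖(T ^ (n + r + 1)) x‖ ≤ Mv * ‖x‖ := by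
    intro x n
    have h1 : ‖(T ^ (n + r + 1)) x‖ ≤ D * (((n + r + 1 : ℕ):ℝ)+1)^(r+1) * ‖x‖ := by
      refine le_trans ((T ^ (n + r + 1)).le_opNorm x) ?_
      exact mul_le_mul_of_nonneg_right (hD (n + r + 1)) (norm_nonneg x)
    have hcast : (((n + r + 1 : ℕ):ℝ)+1) = (n:ℝ) + (r:ℝ) + 2 := by push_cast; ring
    rw [hcast] at h1
    have h2 : ((n:ℝ) + (r:ℝ) + 2)^(r+1) ≤ ((r:ℝ)+2)^(r+1) * ((n:ℝ)+1)^(r+1) := by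
      rw [← mul_pow]
      have h5 : (n:ℝ) + (r:ℝ) + 2 ≤ ((r:ℝ)+2) * ((n:ℝ)+1) := by
        nlinarith [Nat.cast_nonneg (α := ℝ) n, Nat.cast_nonneg (α := ℝ) r]
      gcongr
    have h3 : ρ n * (((r:ℝ)+2)^(r+1) * ((n:ℝ)+1)^(r+1)) ≤ ((r+1).factorial : ℝ) * ((r:ℝ)+2)^(r+1) := by
      have h := mul_le_mul_of_nonneg_right (hρ_ub n)
        (by positivity : (0:ℝ) ≤ ((r:ℝ)+2)^(r+1) * ((n:ℝ)+1)^(r+1))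
      have he : ((r+1).factorial : ℝ)/((n:ℝ)+1)^(r+1) * (((r:ℝ)+2)^(r+1) * ((n:ℝ)+1)^(r+1))
          = ((r+1).factorial : ℝ) * ((r:ℝ)+2)^(r+1) := by
        field_simp
      rw [he] at h
      exact h
    calc ρ n * ‖(T ^ (n + r + 1)) x‖
        ≤ ρ n * (D * ((n:ℝ) + (r:ℝ) + 2)^(r+1) * ‖x‖) :=
          mul_le_mul_of_nonneg_left h1 (le_of_lt (hρpos n))
      _ ≤ ρ n * (D * (((r:ℝ)+2)^(r+1) * ((n:ℝ)+1)^(r+1)) * ‖x‖) := by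
          have : (0:ℝ) ≤ ‖x‖ := norm_nonneg x
          have hD0' := le_of_lt hD0
          refine mul_le_mul_of_nonneg_left ?_ (le_of_lt (hρpos n))
          exact mul_le_mul_of_nonneg_right (mul_le_mul_of_nonneg_left h2 hD0') this
      _ = (ρ n * (((r:ℝ)+2)^(r+1) * ((n:ℝ)+1)^(r+1))) * (D * ‖x‖) := by ring
      _ ≤ (((r+1).factorial : ℝ) * ((r:ℝ)+2)^(r+1)) * (D * ‖x‖) := by
          refine mul_le_mul_of_nonneg_right h3 ?_
          positivity
      _ = Mv * ‖x‖ := by rw [hMvdef]; ring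
  have htendC : ∀ c : ℝ, Tendsto (fun n : ℕ => c / ((n:ℝ)+1)) atTop (𝓝 0) :=
    fun c => Tendsto.div_atTop tendsto_const_nhds
      (tendsto_atTop_add_const_right _ _ tendsto_natCast_atTop_atTop)
  have hgv : ∀ x : X, limsup (fun n => ‖cesaroMean (r + 1) T n (((T - 1) ^ (r + 1)) x)‖) atTop
      = limsup (fun n => ρ n * ‖(T ^ (n + r + 1)) x‖) atTop := by
    intro x
    refine limsup_eq_of_sub_le (M := Mv * ‖x‖ + KR * ‖x‖) (fun n => norm_nonneg _)
      (fun n => mul_nonneg (le_of_lt (hρpos n)) (norm_nonneg _)) (fun n => ?_) (fun n => ?_)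
      (hdiff x) (htendC (KR * ‖x‖))
    · have h1 := hdiff x n
      have h2 := hvM x n
      have h3 : KR * ‖x‖ / ((n:ℝ)+1) ≤ KR * ‖x‖ := by
        refine div_le_self (by positivity) (by linarith [Nat.cast_nonneg (α := ℝ) n])
      have := (abs_le.mp h1).2
      linarith
    · have h2 := hvM x n
      have : (0:ℝ) ≤ KR * ‖x‖ := by positivity
      linarith
  have hQv : ∀ x : X, ‖Q x‖ = limsup (fun n => ρ n * ‖(T ^ (n + r + 1)) x‖) atTop :=
    fun x => by rw [hQnorm x, hgv x]
  have hratio1 : Tendsto (fun n : ℕ => ((n:ℝ) + 1 + ((r:ℝ)+1)) / ((n:ℝ)+1)) atTop (𝓝 1) := by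
    refine (tendsto_ratio_aux ((r:ℝ)+2)).congr (fun n => ?_)
    have : (n:ℝ) + ((r:ℝ)+2) = (n:ℝ)+1+((r:ℝ)+1) := by ring
    rw [this]
  have hratio_ub : ∀ n : ℕ, ((n:ℝ) + 1 + ((r:ℝ)+1)) / ((n:ℝ)+1) ≤ (r:ℝ) + 2 := by
    intro n
    rw [div_le_iff₀ (by positivity : (0:ℝ) < (n:ℝ)+1)]
    nlinarith [Nat.cast_nonneg (α := ℝ) n, Nat.cast_nonneg (α := ℝ) r]
  have hratio_nn : ∀ n : ℕ, (0:ℝ) ≤ ((n:ℝ) + 1 + ((r:ℝ)+1)) / ((n:ℝ)+1) :=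
    fun n => by positivity
  have hρ_shift : ∀ n : ℕ, ρ n = ρ (n+1) * (((n:ℝ) + 1 + ((r:ℝ)+1)) / ((n:ℝ)+1)) := by
    intro n
    have hprodid : (∏ i ∈ range (r+1), ((n:ℝ) + 1 + 1 + i)) * ((n:ℝ)+1)
        = (∏ i ∈ range (r+1), ((n:ℝ) + 1 + i)) * ((n:ℝ) + 1 + ((r:ℝ)+1)) := by
      have e1 := Finset.prod_range_succ' (fun i => (n:ℝ) + 1 + (i:ℝ)) (r+1)
      have e2 := Finset.prod_range_succ (fun i => (n:ℝ) + 1 + (i:ℝ)) (r+1)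
      have e3 : (∏ i ∈ range (r+1), ((n:ℝ) + 1 + 1 + i))
          = ∏ k ∈ range (r+1), ((n:ℝ) + 1 + ((k+1:ℕ):ℝ)) :=
        prod_congr rfl fun i _ => by push_cast; ring
      rw [e3]
      calc (∏ k ∈ range (r+1), ((n:ℝ)+1+((k+1:ℕ):ℝ))) * ((n:ℝ)+1)
          = (∏ k ∈ range (r+1), ((n:ℝ)+1+((k+1:ℕ):ℝ))) * ((n:ℝ)+1+((0:ℕ):ℝ)) := by
            norm_num
        _ = ∏ i ∈ range (r+1+1), ((n:ℝ)+1+(i:ℝ)) := e1.symm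
        _ = (∏ i ∈ range (r+1), ((n:ℝ)+1+(i:ℝ))) * ((n:ℝ)+1+(((r+1):ℕ):ℝ)) := e2
        _ = (∏ i ∈ range (r+1), ((n:ℝ)+1+(i:ℝ))) * ((n:ℝ)+1+((r:ℝ)+1)) := by
            push_cast; ring
    have hp1 : (0:ℝ) < ∏ i ∈ range (r+1), ((n:ℝ) + 1 + i) := hprodpos n
    have hp2 : (0:ℝ) < ∏ i ∈ range (r+1), (((n+1:ℕ):ℝ) + 1 + i) := hprodpos (n+1)
    have hn1 : ((n:ℝ)+1) ≠ 0 := by positivity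
    have hnr : ((n:ℝ) + 1 + ((r:ℝ)+1)) ≠ 0 := by positivity
    rw [hρdef]
    field_simp
    push_cast; linear_combination hprodid
  have hshift : ∀ x : X, limsup (fun n => ρ n * ‖(T ^ (n + r + 1)) (T x)‖) atTop
      = limsup (fun n => ρ n * ‖(T ^ (n + r + 1)) x‖) atTop := by
    intro x
    have hTx : ∀ n : ℕ, (T ^ (n + r + 1)) (T x) = (T ^ ((n+1) + r + 1)) x := by
      intro n
      rw [← ContinuousLinearMap.mul_apply, ← pow_succ]
      congr 2
      omega
    have hfun : (fun n : ℕ => ρ n * ‖(T ^ (n + r + 1)) (T x)‖)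
        = fun n : ℕ => (((n:ℝ) + 1 + ((r:ℝ)+1)) / ((n:ℝ)+1))
            * (ρ (n+1) * ‖(T ^ ((n+1) + r + 1)) x‖) := by
      funext n
      rw [hTx n, hρ_shift n]
      ring
    rw [hfun]
    have hu0 : ∀ n : ℕ, (0:ℝ) ≤ ρ (n+1) * ‖(T ^ ((n+1) + r + 1)) x‖ :=
      fun n => mul_nonneg (le_of_lt (hρpos (n+1))) (norm_nonneg _)
    have huM : ∀ n : ℕ, ρ (n+1) * ‖(T ^ ((n+1) + r + 1)) x‖ ≤ Mv * ‖x‖ := fun n => hvM x (n+1)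
    have heq2 : limsup (fun n : ℕ => (((n:ℝ) + 1 + ((r:ℝ)+1)) / ((n:ℝ)+1))
        * (ρ (n+1) * ‖(T ^ ((n+1) + r + 1)) x‖)) atTop
        = limsup (fun n : ℕ => ρ (n+1) * ‖(T ^ ((n+1) + r + 1)) x‖) atTop := by
      refine limsup_eq_of_sub_le (M := ((r:ℝ)+2) * (Mv * ‖x‖))
        (fun n => mul_nonneg (hratio_nn n) (hu0 n)) hu0
        (fun n => ?_) (fun n => ?_)
        (e := fun n => |(((n:ℝ) + 1 + ((r:ℝ)+1)) / ((n:ℝ)+1)) - 1| * (Mv * ‖x‖))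
        (fun n => ?_) ?_
      · calc (((n:ℝ) + 1 + ((r:ℝ)+1)) / ((n:ℝ)+1)) * (ρ (n+1) * ‖(T ^ ((n+1) + r + 1)) x‖)
            ≤ ((r:ℝ)+2) * (ρ (n+1) * ‖(T ^ ((n+1) + r + 1)) x‖) :=
              mul_le_mul_of_nonneg_right (hratio_ub n) (hu0 n)
          _ ≤ ((r:ℝ)+2) * (Mv * ‖x‖) :=
              mul_le_mul_of_nonneg_left (huM n) (by positivity)
      · have h1 := huM n
        have h2 : (1:ℝ) ≤ (r:ℝ)+2 := by linarith [Nat.cast_nonneg (α := ℝ) r]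
        have h3 : (0:ℝ) ≤ Mv * ‖x‖ := by positivity
        nlinarith
      · have : (((n:ℝ) + 1 + ((r:ℝ)+1)) / ((n:ℝ)+1))
            * (ρ (n+1) * ‖(T ^ ((n+1) + r + 1)) x‖) - ρ (n+1) * ‖(T ^ ((n+1) + r + 1)) x‖
            = ((((n:ℝ) + 1 + ((r:ℝ)+1)) / ((n:ℝ)+1)) - 1)
              * (ρ (n+1) * ‖(T ^ ((n+1) + r + 1)) x‖) := by ring
        rw [this, abs_mul]
        refine mul_le_mul_of_nonneg_left ?_ (abs_nonneg _)
        rw [abs_of_nonneg (hu0 n)]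
        exact huM n
      · have h4 : Tendsto (fun n : ℕ => |(((n:ℝ) + 1 + ((r:ℝ)+1)) / ((n:ℝ)+1)) - 1|)
            atTop (𝓝 0) := by
          have := (hratio1.sub_const 1)
          rw [sub_self] at this
          simpa using this.abs
        have := h4.mul_const (Mv * ‖x‖)
        rwa [zero_mul] at this
    rw [heq2]
    exact limsup_nat_add (fun n => ρ n * ‖(T ^ (n + r + 1)) x‖) 1
  have hQT : ∀ z : X, ‖Q (T z)‖ = ‖Q z‖ := fun z => by rw [hQv (T z), hQv z, hshift z]
  -- step 5 estimate
  have hstep5 : ∀ (lam : ℂ), ‖lam‖ = 1 → ∀ (d : ℕ) (x : X),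
      limsup (fun n => ρ n * ‖(T ^ (n + r + 1))
        (((((d:ℂ)+1)⁻¹ • ∑ j ∈ range (d+1), lam ^ j • T ^ j) : X →L[ℂ] X) x)‖) atTop
      ≤ 2 * (C+1) * ((r+1).factorial : ℝ) / ((d:ℝ)+1) * ‖x‖ := by
    intro lam hlam d x
    set L := 2 * (C+1) * ((r+1).factorial : ℝ) / ((d:ℝ)+1) * ‖x‖ with hL
    set P : X →L[ℂ] X := (((d:ℂ)+1)⁻¹ • ∑ j ∈ range (d+1), lam ^ j • T ^ j) with hP
    have hdc : ‖((d:ℂ)+1)⁻¹‖ = ((d:ℝ)+1)⁻¹ := by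
      rw [norm_inv]
      congr 1
      have h9 : ((d : ℂ) + 1) = ((d + 1 : ℕ) : ℂ) := by push_cast; ring
      rw [h9, Complex.norm_natCast]
      push_cast; ring
    have hWbound : ∀ n : ℕ, ‖(T ^ (n + r + 1)) (P x)‖
        ≤ ((d:ℝ)+1)⁻¹ * (2 * (C+1) * ((n:ℝ) + ((r:ℝ) + (d:ℝ) + 2)) ^ (r+1)) * ‖x‖ := by
      intro n
      have happly : (T ^ (n + r + 1)) (P x)
          = ((d:ℂ)+1)⁻¹ • ∑ j ∈ range (d+1), lam ^ j • (T ^ (n + r + 1 + j)) x := by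
        rw [hP]
        simp only [ContinuousLinearMap.smul_apply, ContinuousLinearMap.sum_apply,
          map_smul, map_sum]
        congr 1
        refine sum_congr rfl fun j hj => ?_
        congr 1
        rw [← ContinuousLinearMap.mul_apply, ← pow_add]
      set W : X := ∑ j ∈ range (d+1), lam ^ j • (T ^ (n + r + 1 + j)) x with hW
      have hWnorm : ‖W‖ = ‖lam ^ (n + r + 1) • W‖ := by
        rw [norm_smul, norm_pow, hlam, one_pow, one_mul]
      have hWsum : lam ^ (n + r + 1) • W
          = (∑ k ∈ range (n + r + 1 + d + 1), lam ^ k • (T ^ k) x)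
            - (∑ k ∈ range (n + r + 1), lam ^ k • (T ^ k) x) := by
        rw [← Finset.sum_Ico_eq_sub (fun k => lam ^ k • (T ^ k) x) (by omega)]
        rw [Finset.sum_Ico_eq_sum_range]
        have hc : n + r + 1 + d + 1 - (n + r + 1) = d + 1 := by omega
        rw [hc, hW, smul_sum]
        refine sum_congr rfl fun j hj => ?_
        rw [smul_smul, ← pow_add]
      have hsums : ∀ m : ℕ, ‖∑ k ∈ range (m+1), lam ^ k • (T ^ k) x‖
          ≤ (C+1) * ((m:ℝ)+1)^(r+1) * ‖x‖ := by
        intro m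
        have h1 : (∑ k ∈ range (m+1), lam ^ k • (T ^ k) x)
            = (∑ k ∈ range (m+1), lam ^ k • T ^ k) x := by
          simp only [ContinuousLinearMap.sum_apply, ContinuousLinearMap.smul_apply]
        rw [h1]
        refine le_trans (ContinuousLinearMap.le_opNorm _ x) ?_
        exact mul_le_mul_of_nonneg_right (hSU lam hlam m) (norm_nonneg x)
      have hW2 : ‖W‖ ≤ 2 * (C+1) * ((n:ℝ) + ((r:ℝ) + (d:ℝ) + 2)) ^ (r+1) * ‖x‖ := by
        rw [hWnorm, hWsum]
        refine le_trans (norm_sub_le _ _) ?_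
        have e1 : n + r + 1 + d + 1 = (n + r + 1 + d) + 1 := by omega
        rw [e1]
        have h1 := hsums (n + r + 1 + d)
        have h2 := hsums (n + r)
        have hcast1 : (((n + r + 1 + d:ℕ)):ℝ) + 1 ≤ (n:ℝ) + ((r:ℝ) + (d:ℝ) + 2) := by
          push_cast; linarith
        have hcast2 : (((n + r:ℕ)):ℝ) + 1 ≤ (n:ℝ) + ((r:ℝ) + (d:ℝ) + 2) := by
          push_cast
          have := Nat.cast_nonneg (α := ℝ) d
          linarith
        have hmono1 : ((((n + r + 1 + d:ℕ)):ℝ) + 1)^(r+1)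
            ≤ ((n:ℝ) + ((r:ℝ) + (d:ℝ) + 2))^(r+1) := by
          gcongr
        have hmono2 : ((((n + r:ℕ)):ℝ) + 1)^(r+1)
            ≤ ((n:ℝ) + ((r:ℝ) + (d:ℝ) + 2))^(r+1) := by
          gcongr
        have hx0 := norm_nonneg x
        nlinarith [mul_le_mul_of_nonneg_right hmono1 (mul_nonneg (by linarith : (0:ℝ) ≤ C+1) hx0),
          mul_le_mul_of_nonneg_right hmono2 (mul_nonneg (by linarith : (0:ℝ) ≤ C+1) hx0)]
      calc ‖(T ^ (n + r + 1)) (P x)‖ = ((d:ℝ)+1)⁻¹ * ‖W‖ := by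
            rw [happly, norm_smul, hdc]
        _ ≤ ((d:ℝ)+1)⁻¹ * (2 * (C+1) * ((n:ℝ) + ((r:ℝ) + (d:ℝ) + 2)) ^ (r+1) * ‖x‖) :=
            mul_le_mul_of_nonneg_left hW2 (by positivity)
        _ = ((d:ℝ)+1)⁻¹ * (2 * (C+1) * ((n:ℝ) + ((r:ℝ) + (d:ℝ) + 2)) ^ (r+1)) * ‖x‖ := by ring
    refine limsup_le_of_le_tendsto
      (fun n => mul_nonneg (hρpos n).le (norm_nonneg _)) (fun n => ?_) ?_
      (w := fun n => (2 * (C+1) * ((r+1).factorial : ℝ) / ((d:ℝ)+1) * ‖x‖)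
        * ((((n:ℝ) + ((r:ℝ) + (d:ℝ) + 2)) / ((n:ℝ)+1)) ^ (r+1)))
    · -- pointwise bound
      have h1 := hWbound n
      have h2 : ρ n * ‖(T ^ (n + r + 1)) (P x)‖
          ≤ (((r+1).factorial : ℝ) / ((n:ℝ)+1)^(r+1))
            * (((d:ℝ)+1)⁻¹ * (2 * (C+1) * ((n:ℝ) + ((r:ℝ) + (d:ℝ) + 2)) ^ (r+1)) * ‖x‖) := by
        refine mul_le_mul (hρ_ub n) h1 (norm_nonneg _) (by positivity)
      refine le_trans h2 (le_of_eq ?_)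
      rw [div_pow]; ring
    · -- tendsto of majorant
      have hrat : Tendsto (fun n : ℕ => ((n:ℝ) + ((r:ℝ) + (d:ℝ) + 2)) / ((n:ℝ)+1))
          atTop (𝓝 1) := tendsto_ratio_aux _
      have hpow : Tendsto (fun n : ℕ => (((n:ℝ) + ((r:ℝ) + (d:ℝ) + 2)) / ((n:ℝ)+1)) ^ (r+1))
          atTop (𝓝 1) := by
        have := hrat.pow (r+1)
        rwa [one_pow] at this
      have := hpow.const_mul (2 * (C+1) * ((r+1).factorial : ℝ) / ((d:ℝ)+1) * ‖x‖)
      rwa [mul_one] at this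
  -- Q vanishes identically
  have hQ0 : ∀ z : X, Q z = 0 := by
    by_contra hcon
    push_neg at hcon
    obtain ⟨x₀, hx₀⟩ := hcon
    set Ql : X →ₗ[ℂ] Y := (Q : X →ₗ[ℂ] Y) with hQl
    set R : Submodule ℂ Y := LinearMap.range Ql with hRdef
    have hRclosed : IsClosed (R : Set Y) := by
      have : (R : Set Y) = Set.range ⇑Q := by
        rw [hRdef, LinearMap.coe_range]
        rfl
      rw [this]
      exact hQrange
    haveI hRcomplete : CompleteSpace ↥R := hRclosed.completeSpace_coe
    have hmem : ∀ x : X, Q x ∈ R := fun x => LinearMap.mem_range.mpr ⟨x, rfl⟩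
    set qmap : X → ↥R := fun x => ⟨Q x, hmem x⟩ with hqmap
    have hqnorm : ∀ x : X, ‖qmap x‖ = ‖Q x‖ := fun x => rfl
    haveI : Nontrivial ↥R := by
      refine ⟨⟨qmap x₀, 0, fun h => hx₀ ?_⟩⟩
      have := congrArg (Subtype.val) h
      simpa [hqmap] using this
    have hkerT : ∀ z : X, Q z = 0 → Q (T z) = 0 := by
      intro z hz
      have := hQT z
      rw [hz, norm_zero] at this
      exact norm_eq_zero.mp this
    set K : Submodule ℂ X := LinearMap.ker Ql with hKdef
    have hKT : K ≤ K.comap (T : X →ₗ[ℂ] X) := by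
      intro z hz
      rw [hKdef, LinearMap.mem_ker] at hz
      rw [Submodule.mem_comap, hKdef, LinearMap.mem_ker]
      exact hkerT z hz
    set e : (X ⧸ K) ≃ₗ[ℂ] ↥R := Ql.quotKerEquivRange with hedef
    set Udef : ↥R →ₗ[ℂ] ↥R :=
      (e.toLinearMap) ∘ₗ (K.mapQ K (T : X →ₗ[ℂ] X) hKT) ∘ₗ (e.symm.toLinearMap) with hUdef
    have hqe : ∀ x : X, qmap x = e (Submodule.Quotient.mk x) := by
      intro x
      apply Subtype.ext
      rw [hedef, LinearMap.quotKerEquivRange_apply_mk]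
      rfl
    have hUq : ∀ x : X, Udef (qmap x) = qmap (T x) := by
      intro x
      rw [hqe x, hqe (T x), hUdef]
      simp only [LinearMap.coe_comp, Function.comp_apply, LinearEquiv.coe_coe,
        LinearEquiv.symm_apply_apply]
      rw [Submodule.mapQ_apply]
      rfl
    have hUiso : ∀ y : ↥R, ‖Udef y‖ = ‖y‖ := by
      intro y
      obtain ⟨x, hx⟩ := y.2
      have hyx : y = qmap x := by
        apply Subtype.ext
        rw [hqmap]
        exact hx.symm
      rw [hyx, hUq x, hqnorm, hqnorm, hQT]
    set ULI : ↥R →ₗᵢ[ℂ] ↥R := ⟨Udef, hUiso⟩ with hULI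
    set U : ↥R →L[ℂ] ↥R := ULI.toContinuousLinearMap with hUdef2
    have hUq' : ∀ x : X, U (qmap x) = qmap (T x) := hUq
    have hUpow : ∀ (k : ℕ) (x : X), (U ^ k) (qmap x) = qmap ((T ^ k) x) := by
      intro k
      induction k with
      | zero => intro x; simp
      | succ k ih =>
        intro x
        rw [pow_succ, ContinuousLinearMap.mul_apply, hUq' x, ih (T x),
          ← ContinuousLinearMap.mul_apply, ← pow_succ]
    have hUpowiso : ∀ (k : ℕ) (y : ↥R), ‖(U ^ k) y‖ = ‖y‖ := by
      intro k
      induction k with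
      | zero => intro y; simp
      | succ k ih =>
        intro y
        rw [pow_succ, ContinuousLinearMap.mul_apply, ih (U y)]
        exact hUiso y
    -- build the smallness hypothesis and contradict
    set Qr : X →L[ℂ] ↥R := Q.codRestrict R hmem with hQr
    have hQrq : ∀ x : X, Qr x = qmap x := fun x => rfl
    have hQrsurj : Function.Surjective ⇑Qr := by
      intro y
      obtain ⟨x, hx⟩ := y.2
      exact ⟨x, Subtype.ext hx⟩
    obtain ⟨c₃, hc₃pos, hc₃⟩ := Qr.exists_preimage_norm_le hQrsurj
    set B : ℝ := 2 * (C+1) * ((r+1).factorial : ℝ) with hB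
    have hB0 : 0 < B := by
      rw [hB]
      have : (0:ℝ) < ((r+1).factorial : ℝ) := by exact_mod_cast (r+1).factorial_pos
      nlinarith
    refine spec_contra U hUpowiso ?_
    intro ν hν1
    set lam : ℂ := ν⁻¹ with hlamdef
    have hlam1 : ‖lam‖ = 1 := by rw [hlamdef, norm_inv, hν1]; norm_num
    set d : ℕ := Nat.ceil (B * c₃) with hd
    have hdlt : B * c₃ / ((d:ℝ)+1) < 1 := by
      have h1 : B * c₃ ≤ (d:ℝ) := Nat.le_ceil _
      rw [div_lt_one (by positivity)]
      linarith
    refine ⟨d, lt_of_le_of_lt ?_ hdlt⟩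
    have hMopapp : ∀ x : X,
        (∑ j ∈ range (d+1), (((d:ℂ)+1)⁻¹ * lam ^ j) • U ^ j) (Qr x)
        = Qr (((((d:ℂ)+1)⁻¹ • ∑ j ∈ range (d+1), lam ^ j • T ^ j) : X →L[ℂ] X) x) := by
      intro x
      apply Subtype.ext
      have hlhs : ((∑ j ∈ range (d+1), (((d:ℂ)+1)⁻¹ * lam ^ j) • U ^ j) (Qr x) : Y)
          = ∑ j ∈ range (d+1), (((d:ℂ)+1)⁻¹ * lam ^ j) • (Q ((T ^ j) x)) := by
        rw [ContinuousLinearMap.sum_apply, Submodule.coe_sum]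
        refine sum_congr rfl fun j hj => ?_
        rw [ContinuousLinearMap.smul_apply, Submodule.coe_smul, hQrq, hUpow j x]
      rw [hlhs]
      have hrhs : (Qr (((((d:ℂ)+1)⁻¹ • ∑ j ∈ range (d+1), lam ^ j • T ^ j) : X →L[ℂ] X) x) : Y)
          = Q (((((d:ℂ)+1)⁻¹ • ∑ j ∈ range (d+1), lam ^ j • T ^ j) : X →L[ℂ] X) x) := rfl
      rw [hrhs]
      simp only [ContinuousLinearMap.smul_apply, ContinuousLinearMap.sum_apply, map_smul, map_sum]
      rw [smul_sum]
      refine sum_congr rfl fun j hj => ?_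
      rw [smul_smul]
    refine ContinuousLinearMap.opNorm_le_bound _ (by positivity) (fun y => ?_)
    obtain ⟨x', hx', hx'n⟩ := hc₃ y
    rw [← hx', hMopapp x']
    have h1 : ‖Qr (((((d:ℂ)+1)⁻¹ • ∑ j ∈ range (d+1), lam ^ j • T ^ j) : X →L[ℂ] X) x')‖
        = ‖Q (((((d:ℂ)+1)⁻¹ • ∑ j ∈ range (d+1), lam ^ j • T ^ j) : X →L[ℂ] X) x')‖ := rfl
    rw [h1, hQv _]
    have h2 := hstep5 lam hlam1 d x'
    refine le_trans h2 ?_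
    calc 2 * (C+1) * ((r+1).factorial : ℝ) / ((d:ℝ)+1) * ‖x'‖
        ≤ 2 * (C+1) * ((r+1).factorial : ℝ) / ((d:ℝ)+1) * (c₃ * ‖y‖) := by
          refine mul_le_mul_of_nonneg_left hx'n ?_
          positivity
      _ = B * c₃ / ((d:ℝ)+1) * ‖Qr x'‖ := by rw [hx', hB]; ring
  -- conclusion
  intro x
  have hz : limsup (fun n => ρ n * ‖(T ^ (n + r + 1)) x‖) atTop = 0 := by
    rw [← hQv x, hQ0 x, norm_zero]
  have hv0 : Tendsto (fun n => ρ n * ‖(T ^ (n + r + 1)) x‖) atTop (𝓝 0) :=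
    tendsto_zero_of_limsup_zero
      (fun n => mul_nonneg (hρpos n).le (norm_nonneg _)) (fun n => hvM x n) hz
  have hfact : (0:ℝ) < ((r+1).factorial : ℝ) := by exact_mod_cast (r+1).factorial_pos
  have hsq : ∀ n : ℕ, ‖(T ^ (n + (r+1))) x‖ / (((n + (r+1) : ℕ)):ℝ) ^ (r+1)
      ≤ (ρ n * ‖(T ^ (n + r + 1)) x‖) / ((r+1).factorial : ℝ) := by
    intro n
    show ‖(T ^ (n + r + 1)) x‖ / (((n + (r+1) : ℕ)):ℝ) ^ (r+1)
      ≤ (ρ n * ‖(T ^ (n + r + 1)) x‖) / ((r+1).factorial : ℝ)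
    have hcast : (((n + (r+1) : ℕ)):ℝ) = (n:ℝ) + 1 + (r:ℝ) := by push_cast; ring
    rw [hcast]
    have hden : (0:ℝ) < ((n:ℝ) + 1 + (r:ℝ)) ^ (r+1) := by positivity
    rw [div_le_div_iff₀ hden hfact]
    have h1 := mul_le_mul_of_nonneg_right (hρ_lb n) (norm_nonneg ((T ^ (n + r + 1)) x))
    rw [div_mul_eq_mul_div, div_le_iff₀ hden] at h1
    linarith
  have hsqt : Tendsto (fun n : ℕ => ‖(T ^ (n + (r+1))) x‖ / (((n + (r+1) : ℕ)):ℝ) ^ (r+1))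
      atTop (𝓝 0) := by
    refine squeeze_zero (fun n => by positivity) hsq ?_
    have := hv0.div_const (((r+1).factorial : ℝ))
    rwa [zero_div] at this
  exact (tendsto_add_atTop_iff_nat (f := fun m : ℕ => ‖(T ^ m) x‖ / (m:ℝ) ^ (r+1)) (r+1)).mp hsqt
end
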